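/- arXiv:1107.2876 — 11 statements merged into one kernel-verified Lean document; each statement's English description precedes it below -/
import Mathlib

section
/- Let λ_α, λ_β > 0 and for each k ∈ ℕ define p̂_k(t) = Σ_{r=0}^∞ e^{−λ_α r} (λ_α r)^k / k! · e^{−λ_β t} (λ_β t)^r / r! for t > 0. Then for every t > 0 and every k ∈ ℕ, the function t ↦ p̂_k(t) is differentiable at t and satisfies the difference-differential equation d/dt p̂_k(t) = −λ_β p̂_k(t) + λ_β e^{−λ_α} Σ_{m=0}^{k} (λ_α^m / m!) · p̂_{k−m}(t). -/
open Real

/-- The state probabilities of the iterated Poisson process `N̂(t) = N_α(N_β(t))`. -/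
noncomputable def iterPoissonPMF (lα lβ t : ℝ) (k : ℕ) : ℝ :=
  ∑' r : ℕ, Real.exp (-lα * r) * (lα * r) ^ k / (Nat.factorial k) *
    (Real.exp (-lβ * t) * (lβ * t) ^ r / (Nat.factorial r))

lemma aux_le_one {x : ℝ} (hx : 0 ≤ x) (k : ℕ) :
    Real.exp (-x) * x ^ k / (Nat.factorial k) ≤ 1 := by
  have h1 : x ^ k / (Nat.factorial k) ≤ Real.exp x := Real.pow_div_factorial_le_exp x hx k
  have h2 : Real.exp (-x) * x ^ k / (Nat.factorial k)
      = Real.exp (-x) * (x ^ k / (Nat.factorial k)) := by ring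
  rw [h2]
  calc Real.exp (-x) * (x ^ k / (Nat.factorial k)) ≤ Real.exp (-x) * Real.exp x := by
        exact mul_le_mul_of_nonneg_left h1 (Real.exp_nonneg _)
    _ = 1 := by rw [← Real.exp_add]; simp

lemma aux_summable_shift (M : ℝ) :
    Summable (fun r : ℕ => (r : ℝ) * M ^ (r - 1) / (Nat.factorial r)) := by
  rw [← summable_nat_add_iff 1]
  have : (fun n : ℕ => ((n + 1 : ℕ) : ℝ) * M ^ ((n + 1) - 1) / (Nat.factorial (n + 1)))
      = fun n : ℕ => M ^ n / (Nat.factorial n) := by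
    funext n
    have h : (Nat.factorial (n + 1) : ℝ) = (n + 1) * Nat.factorial n := by
      rw [Nat.factorial_succ]; push_cast; ring
    rw [Nat.add_sub_cancel, h]
    have hn : ((n : ℝ) + 1) ≠ 0 := by positivity
    push_cast
    field_simp
  rw [this]
  exact Real.summable_pow_div_factorial M

lemma aux_le_one' {a b : ℝ} (h : 0 ≤ a * b) (k : ℕ) :
    Real.exp (-a * b) * (a * b) ^ k / (Nat.factorial k) ≤ 1 := by
  rw [neg_mul]; exact aux_le_one h k

lemma aux_nonneg' {a b : ℝ} (h : 0 ≤ a * b) (k : ℕ) :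
    0 ≤ Real.exp (-a * b) * (a * b) ^ k / (Nat.factorial k) := by positivity

lemma aux_norm_le (lα lβ x : ℝ) (hα : 0 < lα) (j r : ℕ) :
    ‖Real.exp (-lα * r) * (lα * r) ^ j / (Nat.factorial j) *
      (Real.exp (-lβ * x) * (lβ * x) ^ r / (Nat.factorial r))‖
      ≤ Real.exp (-lβ * x) * (|lβ * x| ^ r / (Nat.factorial r)) := by
  have hab : (0:ℝ) ≤ lα * r := by positivity
  rw [norm_mul]
  have h1 : ‖Real.exp (-lα * r) * (lα * r) ^ j / (Nat.factorial j)‖ ≤ 1 := by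
    rw [Real.norm_eq_abs, abs_of_nonneg (aux_nonneg' hab j)]
    exact aux_le_one' hab j
  have h2 : ‖Real.exp (-lβ * x) * (lβ * x) ^ r / (Nat.factorial r)‖
      = Real.exp (-lβ * x) * (|lβ * x| ^ r / (Nat.factorial r)) := by
    rw [Real.norm_eq_abs, abs_div, abs_mul, abs_pow, abs_of_nonneg (Real.exp_nonneg _),
      Nat.abs_cast]
    ring
  calc ‖Real.exp (-lα * r) * (lα * r) ^ j / (Nat.factorial j)‖ *
        ‖Real.exp (-lβ * x) * (lβ * x) ^ r / (Nat.factorial r)‖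
      ≤ 1 * ‖Real.exp (-lβ * x) * (lβ * x) ^ r / (Nat.factorial r)‖ :=
        mul_le_mul_of_nonneg_right h1 (norm_nonneg _)
    _ = Real.exp (-lβ * x) * (|lβ * x| ^ r / (Nat.factorial r)) := by rw [one_mul, h2]

lemma aux_summable_main (lα lβ x : ℝ) (hα : 0 < lα) (j : ℕ) :
    Summable (fun r : ℕ => Real.exp (-lα * r) * (lα * r) ^ j / (Nat.factorial j) *
      (Real.exp (-lβ * x) * (lβ * x) ^ r / (Nat.factorial r))) := by
  apply Summable.of_norm
  exact Summable.of_nonneg_of_le (fun r => norm_nonneg _)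
    (fun r => aux_norm_le lα lβ x hα j r)
    ((Real.summable_pow_div_factorial |lβ * x|).mul_left (Real.exp (-lβ * x)))

lemma aux_binom (lα : ℝ) (k n : ℕ) :
    Real.exp (-lα * ((n:ℝ) + 1)) * (lα * ((n:ℝ) + 1)) ^ k / (Nat.factorial k)
      = Real.exp (-lα) * ∑ m ∈ Finset.range (k + 1), lα ^ m / (Nat.factorial m) *
          (Real.exp (-lα * n) * (lα * n) ^ (k - m) / (Nat.factorial (k - m))) := by
  have hexp : Real.exp (-lα * ((n:ℝ) + 1)) = Real.exp (-lα) * Real.exp (-lα * n) := by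
    rw [← Real.exp_add]; ring_nf
  have hpow : (lα * ((n:ℝ) + 1)) ^ k
      = ∑ m ∈ Finset.range (k + 1), lα ^ m * (lα * n) ^ (k - m) * (Nat.choose k m) := by
    have : lα * ((n:ℝ) + 1) = lα + lα * n := by ring
    rw [this, add_pow]
  rw [hexp, hpow, Finset.mul_sum, Finset.sum_div, Finset.mul_sum]
  apply Finset.sum_congr rfl
  intro m hm
  have hmk : m ≤ k := Nat.lt_succ_iff.mp (Finset.mem_range.mp hm)
  have hfact : (Nat.choose k m : ℝ) * (Nat.factorial m) * (Nat.factorial (k - m))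
      = Nat.factorial k := by
    exact_mod_cast congrArg (Nat.cast (R := ℝ)) (Nat.choose_mul_factorial_mul_factorial hmk)
  have h1 : (Nat.factorial k : ℝ) ≠ 0 := by positivity
  have h2 : (Nat.factorial m : ℝ) ≠ 0 := by positivity
  have h3 : (Nat.factorial (k - m) : ℝ) ≠ 0 := by positivity
  field_simp
  rw [← hfact]
  ring

lemma aux_D_bound (lα lβ t : ℝ) (hα : 0 < lα) (hβ : 0 < lβ) (ht : 0 < t) (k r : ℕ)
    (x : ℝ) (hx : x ∈ Set.Ioo (0:ℝ) (t + 1)) :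
    ‖Real.exp (-lα * r) * (lα * r) ^ k / (Nat.factorial k) *
        (Real.exp (-lβ * x) * ((-lβ) * (lβ * x) ^ r + (r:ℝ) * lβ * (lβ * x) ^ (r - 1)) /
          (Nat.factorial r))‖
      ≤ lβ * ((lβ * (t + 1)) ^ r / (Nat.factorial r)) +
        lβ * ((r:ℝ) * (lβ * (t + 1)) ^ (r - 1) / (Nat.factorial r)) := by
  obtain ⟨hx0, hx1⟩ := hx
  set M : ℝ := lβ * (t + 1) with hMdef
  have hab : (0:ℝ) ≤ lα * r := by positivity
  have hlx : (0:ℝ) ≤ lβ * x := by positivity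
  have hM0 : (0:ℝ) ≤ M := by positivity
  have hle : lβ * x ≤ M := by
    rw [hMdef]; exact mul_le_mul_of_nonneg_left (by linarith) hβ.le
  have hpow : ∀ j : ℕ, (lβ * x) ^ j ≤ M ^ j := fun j => pow_le_pow_left₀ hlx hle j
  rw [norm_mul]
  have h1 : ‖Real.exp (-lα * r) * (lα * r) ^ k / (Nat.factorial k)‖ ≤ 1 := by
    rw [Real.norm_eq_abs, abs_of_nonneg (aux_nonneg' hab k)]
    exact aux_le_one' hab k
  have hS : |(-lβ) * (lβ * x) ^ r + (r:ℝ) * lβ * (lβ * x) ^ (r - 1)|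
      ≤ lβ * M ^ r + (r:ℝ) * lβ * M ^ (r - 1) := by
    calc |(-lβ) * (lβ * x) ^ r + (r:ℝ) * lβ * (lβ * x) ^ (r - 1)|
        ≤ |(-lβ) * (lβ * x) ^ r| + |(r:ℝ) * lβ * (lβ * x) ^ (r - 1)| := abs_add_le _ _
      _ = lβ * (lβ * x) ^ r + (r:ℝ) * lβ * (lβ * x) ^ (r - 1) := by
          rw [abs_mul, abs_neg, abs_of_nonneg hβ.le, abs_of_nonneg (pow_nonneg hlx r),
            abs_mul, abs_of_nonneg (by positivity : (0:ℝ) ≤ (r:ℝ) * lβ),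
            abs_of_nonneg (pow_nonneg hlx (r-1))]
      _ ≤ lβ * M ^ r + (r:ℝ) * lβ * M ^ (r - 1) := by
          gcongr
  have hexp1 : Real.exp (-lβ * x) ≤ 1 := by
    apply Real.exp_le_one_iff.mpr
    nlinarith
  have h2 : ‖Real.exp (-lβ * x) * ((-lβ) * (lβ * x) ^ r + (r:ℝ) * lβ * (lβ * x) ^ (r - 1)) /
        (Nat.factorial r)‖
      ≤ (lβ * M ^ r + (r:ℝ) * lβ * M ^ (r - 1)) / (Nat.factorial r) := by
    rw [Real.norm_eq_abs, abs_div, Nat.abs_cast]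
    gcongr
    rw [abs_mul, abs_of_nonneg (Real.exp_nonneg _)]
    calc Real.exp (-lβ * x) * |(-lβ) * (lβ * x) ^ r + (r:ℝ) * lβ * (lβ * x) ^ (r - 1)|
        ≤ 1 * (lβ * M ^ r + (r:ℝ) * lβ * M ^ (r - 1)) :=
          mul_le_mul hexp1 hS (abs_nonneg _) one_pos.le
      _ = lβ * M ^ r + (r:ℝ) * lβ * M ^ (r - 1) := one_mul _
  calc ‖Real.exp (-lα * r) * (lα * r) ^ k / (Nat.factorial k)‖ *
        ‖Real.exp (-lβ * x) * ((-lβ) * (lβ * x) ^ r + (r:ℝ) * lβ * (lβ * x) ^ (r - 1)) /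
          (Nat.factorial r)‖
      ≤ 1 * ((lβ * M ^ r + (r:ℝ) * lβ * M ^ (r - 1)) / (Nat.factorial r)) :=
        mul_le_mul h1 h2 (norm_nonneg _) one_pos.le
    _ = lβ * (M ^ r / (Nat.factorial r)) + lβ * ((r:ℝ) * M ^ (r - 1) / (Nat.factorial r)) := by
        ring

lemma aux_summable_c (lα lβ t : ℝ) (hα : 0 < lα) (hβ : 0 < lβ) (ht : 0 < t) (k : ℕ) :
    Summable (fun r : ℕ => Real.exp (-lα * r) * (lα * r) ^ k / (Nat.factorial k) *
      ((r:ℝ) * Real.exp (-lβ * t) * (lβ * t) ^ (r - 1) / (Nat.factorial r))) := by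
  apply Summable.of_nonneg_of_le (fun r => by positivity) (fun r => ?_)
    (aux_summable_shift (lβ * t))
  have hab : (0:ℝ) ≤ lα * r := by positivity
  have hlt : (0:ℝ) ≤ lβ * t := by positivity
  have h1 : Real.exp (-lα * r) * (lα * r) ^ k / (Nat.factorial k) * Real.exp (-lβ * t) ≤ 1 := by
    calc Real.exp (-lα * r) * (lα * r) ^ k / (Nat.factorial k) * Real.exp (-lβ * t)
        ≤ 1 * 1 := mul_le_mul (aux_le_one' hab k)
          (Real.exp_le_one_iff.mpr (by nlinarith)) (Real.exp_nonneg _) one_pos.le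
      _ = 1 := one_mul 1
  have heq : Real.exp (-lα * r) * (lα * r) ^ k / (Nat.factorial k) *
        ((r:ℝ) * Real.exp (-lβ * t) * (lβ * t) ^ (r - 1) / (Nat.factorial r))
      = (Real.exp (-lα * r) * (lα * r) ^ k / (Nat.factorial k) * Real.exp (-lβ * t)) *
        ((r:ℝ) * (lβ * t) ^ (r - 1) / (Nat.factorial r)) := by ring
  rw [heq]
  exact mul_le_of_le_one_left (by positivity) h1

lemma aux_c_succ (lα lβ t : ℝ) (k n : ℕ) :
    Real.exp (-lα * ((n + 1 : ℕ):ℝ)) * (lα * ((n + 1 : ℕ):ℝ)) ^ k / (Nat.factorial k) *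
      ((((n + 1 : ℕ)):ℝ) * Real.exp (-lβ * t) * (lβ * t) ^ ((n + 1) - 1) /
        (Nat.factorial (n + 1)))
    = ∑ m ∈ Finset.range (k + 1), (Real.exp (-lα) * (lα ^ m / (Nat.factorial m))) *
        (Real.exp (-lα * n) * (lα * n) ^ (k - m) / (Nat.factorial (k - m)) *
          (Real.exp (-lβ * t) * (lβ * t) ^ n / (Nat.factorial n))) := by
  have hfac : ((((n + 1 : ℕ)):ℝ) * Real.exp (-lβ * t) * (lβ * t) ^ ((n + 1) - 1) /
        (Nat.factorial (n + 1)))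
      = Real.exp (-lβ * t) * (lβ * t) ^ n / (Nat.factorial n) := by
    have h : (Nat.factorial (n + 1) : ℝ) = (n + 1) * Nat.factorial n := by
      rw [Nat.factorial_succ]; push_cast; ring
    rw [Nat.add_sub_cancel, h]
    have hn : ((n : ℝ) + 1) ≠ 0 := by positivity
    have hf : ((Nat.factorial n : ℝ)) ≠ 0 := by positivity
    push_cast
    field_simp
  rw [hfac]
  have hcast : ((n + 1 : ℕ):ℝ) = (n:ℝ) + 1 := by push_cast; ring
  rw [hcast, aux_binom lα k n, Finset.mul_sum, Finset.sum_mul]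
  apply Finset.sum_congr rfl
  intro m _
  ring

lemma aux_tsum_eval (lα lβ t : ℝ) (hα : 0 < lα) (hβ : 0 < lβ) (ht : 0 < t) (k : ℕ) :
    ∑' r : ℕ, Real.exp (-lα * r) * (lα * r) ^ k / (Nat.factorial k) *
        (Real.exp (-lβ * t) * ((-lβ) * (lβ * t) ^ r + (r:ℝ) * lβ * (lβ * t) ^ (r - 1)) /
          (Nat.factorial r))
      = -lβ * iterPoissonPMF lα lβ t k +
        lβ * Real.exp (-lα) *
          ∑ m ∈ Finset.range (k + 1), lα ^ m / (Nat.factorial m) *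
            iterPoissonPMF lα lβ t (k - m) := by
  have hsum1 := aux_summable_main lα lβ t hα k
  have hsumc := aux_summable_c lα lβ t hα hβ ht k
  have hE : ∀ r : ℕ, Real.exp (-lα * r) * (lα * r) ^ k / (Nat.factorial k) *
        (Real.exp (-lβ * t) * ((-lβ) * (lβ * t) ^ r + (r:ℝ) * lβ * (lβ * t) ^ (r - 1)) /
          (Nat.factorial r))
      = (-lβ) * (Real.exp (-lα * r) * (lα * r) ^ k / (Nat.factorial k) *
          (Real.exp (-lβ * t) * (lβ * t) ^ r / (Nat.factorial r))) +
        lβ * (Real.exp (-lα * r) * (lα * r) ^ k / (Nat.factorial k) *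
          ((r:ℝ) * Real.exp (-lβ * t) * (lβ * t) ^ (r - 1) / (Nat.factorial r))) := by
    intro r; ring
  rw [tsum_congr hE, Summable.tsum_add (hsum1.mul_left (-lβ)) (hsumc.mul_left lβ),
    tsum_mul_left, tsum_mul_left]
  have hP : (∑' r : ℕ, Real.exp (-lα * r) * (lα * r) ^ k / (Nat.factorial k) *
      (Real.exp (-lβ * t) * (lβ * t) ^ r / (Nat.factorial r))) = iterPoissonPMF lα lβ t k := rfl
  rw [hP]
  congr 1
  -- remaining : lβ * ∑' c = lβ * exp(-lα) * ∑ ...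
  rw [Summable.tsum_eq_zero_add hsumc]
  have hc0 : Real.exp (-lα * (0:ℕ)) * (lα * (0:ℕ)) ^ k / (Nat.factorial k) *
      (((0:ℕ):ℝ) * Real.exp (-lβ * t) * (lβ * t) ^ ((0:ℕ) - 1) / (Nat.factorial 0)) = 0 := by
    simp
  rw [hc0, zero_add]
  have hcs : (fun n : ℕ => Real.exp (-lα * ((n + 1 : ℕ):ℝ)) *
        (lα * ((n + 1 : ℕ):ℝ)) ^ k / (Nat.factorial k) *
        ((((n + 1 : ℕ)):ℝ) * Real.exp (-lβ * t) * (lβ * t) ^ ((n + 1) - 1) /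
          (Nat.factorial (n + 1))))
      = fun n : ℕ => ∑ m ∈ Finset.range (k + 1),
          (Real.exp (-lα) * (lα ^ m / (Nat.factorial m))) *
          (Real.exp (-lα * n) * (lα * n) ^ (k - m) / (Nat.factorial (k - m)) *
            (Real.exp (-lβ * t) * (lβ * t) ^ n / (Nat.factorial n))) := by
    funext n; exact aux_c_succ lα lβ t k n
  rw [hcs, Summable.tsum_finsetSum (fun m _ => (aux_summable_main lα lβ t hα (k - m)).mul_left _)]
  have : ∀ m ∈ Finset.range (k + 1),
      (∑' n : ℕ, (Real.exp (-lα) * (lα ^ m / (Nat.factorial m))) *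
        (Real.exp (-lα * n) * (lα * n) ^ (k - m) / (Nat.factorial (k - m)) *
          (Real.exp (-lβ * t) * (lβ * t) ^ n / (Nat.factorial n))))
      = (Real.exp (-lα) * (lα ^ m / (Nat.factorial m))) * iterPoissonPMF lα lβ t (k - m) := by
    intro m _
    rw [tsum_mul_left]
    rfl
  rw [Finset.sum_congr rfl this, Finset.mul_sum, Finset.mul_sum]
  apply Finset.sum_congr rfl
  intro m _
  ring


/-- the state probabilities `p̂_k(t)` of the iterated Poisson process
satisfy the difference-differential equations
`d/dt p̂_k(t) = −λ_β p̂_k(t) + λ_β e^{−λ_α} Σ_{m=0}^{k} (λ_α^m / m!) p̂_{k−m}(t)`. -/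
theorem iterated_poisson_dde (lα lβ : ℝ) (hα : 0 < lα) (hβ : 0 < lβ) (t : ℝ) (ht : 0 < t)
    (k : ℕ) :
    HasDerivAt (fun s => iterPoissonPMF lα lβ s k)
      (-lβ * iterPoissonPMF lα lβ t k +
        lβ * Real.exp (-lα) *
          ∑ m ∈ Finset.range (k + 1), lα ^ m / (Nat.factorial m) *
            iterPoissonPMF lα lβ t (k - m)) t := by
  rw [← aux_tsum_eval lα lβ t hα hβ ht k]
  have hts : t ∈ Set.Ioo (0:ℝ) (t + 1) := ⟨ht, by linarith⟩
  have hu : Summable (fun r : ℕ => lβ * ((lβ * (t + 1)) ^ r / (Nat.factorial r)) +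
      lβ * ((r:ℝ) * (lβ * (t + 1)) ^ (r - 1) / (Nat.factorial r))) :=
    ((Real.summable_pow_div_factorial (lβ * (t + 1))).mul_left lβ).add
      ((aux_summable_shift (lβ * (t + 1))).mul_left lβ)
  have hderiv_term : ∀ (r : ℕ) (x : ℝ), HasDerivAt
      (fun s : ℝ => Real.exp (-lα * r) * (lα * r) ^ k / (Nat.factorial k) *
        (Real.exp (-lβ * s) * (lβ * s) ^ r / (Nat.factorial r)))
      (Real.exp (-lα * r) * (lα * r) ^ k / (Nat.factorial k) *
        (Real.exp (-lβ * x) * ((-lβ) * (lβ * x) ^ r + (r:ℝ) * lβ * (lβ * x) ^ (r - 1)) /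
          (Nat.factorial r))) x := by
    intro r x
    have he : HasDerivAt (fun s : ℝ => Real.exp (-lβ * s)) (Real.exp (-lβ * x) * (-lβ * 1)) x :=
      ((hasDerivAt_id x).const_mul (-lβ)).exp
    have hp : HasDerivAt (fun s : ℝ => (lβ * s) ^ r) ((r:ℝ) * (lβ * x) ^ (r - 1) * (lβ * 1)) x :=
      ((hasDerivAt_id x).const_mul lβ).pow r
    have h := ((he.fun_mul hp).div_const ((Nat.factorial r : ℝ))).const_mul
      (Real.exp (-lα * r) * (lα * r) ^ k / (Nat.factorial k))
    refine h.congr_deriv ?_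
    ring
  apply hasDerivAt_of_tendstoUniformlyOn (l := Filter.atTop (α := ℕ))
    (f := fun (N : ℕ) (x : ℝ) =>
      ∑ r ∈ Finset.range N, Real.exp (-lα * r) * (lα * r) ^ k / (Nat.factorial k) *
        (Real.exp (-lβ * x) * (lβ * x) ^ r / (Nat.factorial r)))
    (f' := fun (N : ℕ) (x : ℝ) =>
      ∑ r ∈ Finset.range N, Real.exp (-lα * r) * (lα * r) ^ k / (Nat.factorial k) *
        (Real.exp (-lβ * x) * ((-lβ) * (lβ * x) ^ r + (r:ℝ) * lβ * (lβ * x) ^ (r - 1)) /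
          (Nat.factorial r)))
    (g' := fun x : ℝ => ∑' r : ℕ, Real.exp (-lα * r) * (lα * r) ^ k / (Nat.factorial k) *
        (Real.exp (-lβ * x) * ((-lβ) * (lβ * x) ^ r + (r:ℝ) * lβ * (lβ * x) ^ (r - 1)) /
          (Nat.factorial r)))
    isOpen_Ioo ?_ ?_ ?_ hts
  · exact tendstoUniformlyOn_tsum_nat hu (fun r x hx => aux_D_bound lα lβ t hα hβ ht k r x hx)
  · apply Filter.Eventually.of_forall
    intro N x hx
    exact HasDerivAt.fun_sum (fun r _ => hderiv_term r x)
  · intro x hx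
    exact (aux_summable_main lα lβ x hα k).hasSum.tendsto_sum_nat
end

section
/- Let λ_α > 0 and let k ≥ 1 be an integer. Then e^{−λ_α} · (λ_α^k / k!) · Σ_{j=0}^∞ e^{−λ_α j} ((j+1)^k − j^k) < 1. Consequently the first-passage time T_k = inf{s : N_α(N_β(s)) = k} of the iterated Poisson process at level k satisfies Pr{T_k < ∞} < 1, i.e. there is a positive probability of never hitting level k. -/
open Real

namespace IterPoissonAux

/-- `A l k = ∑_{m≥0} e^{-lm} (lm)^k / k!`. -/
noncomputable def A (l : ℝ) (k : ℕ) : ℝ :=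
  ∑' m : ℕ, Real.exp (-l * m) * (l * m) ^ k / k.factorial

/-- `p l j = e^{-l} l^j / j!`. -/
noncomputable def p (l : ℝ) (j : ℕ) : ℝ := Real.exp (-l) * l ^ j / j.factorial

lemma exp_neg_lt_one {l : ℝ} (hl : 0 < l) : Real.exp (-l) < 1 := by
  rw [Real.exp_lt_one_iff]; linarith

lemma base_eq (l : ℝ) (k : ℕ) (m : ℕ) :
    Real.exp (-l * m) * (l * m) ^ k / k.factorial
      = (l ^ k / k.factorial) * ((m : ℝ) ^ k * (Real.exp (-l)) ^ m) := by
  rw [show (-l * m : ℝ) = m * (-l) by ring, Real.exp_nat_mul, mul_pow]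
  ring

lemma summable_base {l : ℝ} (hl : 0 < l) (k : ℕ) :
    Summable (fun m : ℕ => Real.exp (-l * m) * (l * m) ^ k / k.factorial) := by
  have hr : ‖Real.exp (-l)‖ < 1 := by
    rw [Real.norm_eq_abs, abs_of_pos (Real.exp_pos _)]
    exact exp_neg_lt_one hl
  have := (summable_pow_mul_geometric_of_norm_lt_one k hr).mul_left (l ^ k / k.factorial)
  refine this.congr fun m => ?_
  rw [base_eq]

lemma p_pos {l : ℝ} (_hl : 0 < l) (j : ℕ) : 0 < p l j := by
  unfold p
  positivity

lemma summable_p {l : ℝ} (_hl : 0 < l) : Summable (p l) := by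
  have := (Real.summable_pow_div_factorial l).mul_left (Real.exp (-l))
  refine this.congr fun j => ?_
  unfold p; ring

lemma tsum_p {l : ℝ} (hl : 0 < l) : ∑' j : ℕ, p l j = 1 := by
  have h : ∀ j : ℕ, p l j = Real.exp (-l) * (l ^ j / j.factorial) := by
    intro j; unfold p; ring
  rw [tsum_congr h, tsum_mul_left]
  have : ∑' j : ℕ, l ^ j / (j.factorial : ℝ) = Real.exp l := by
    rw [Real.exp_eq_exp_ℝ, NormedSpace.exp_eq_tsum_div]
  rw [this, ← Real.exp_add]
  simp

lemma psum_lt {l : ℝ} (hl : 0 < l) (k : ℕ) :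
    ∑ j ∈ Finset.range (k + 1), p l j < 1 := by
  have h1 : ∑ j ∈ Finset.range (k + 1), p l j < ∑ j ∈ Finset.range (k + 2), p l j := by
    rw [Finset.sum_range_succ (n := k + 1)]
    have := p_pos hl (k + 1)
    linarith
  have h2 : ∑ j ∈ Finset.range (k + 2), p l j ≤ ∑' j : ℕ, p l j :=
    Summable.sum_le_tsum _ (fun i _ => (p_pos hl i).le) (summable_p hl)
  rw [tsum_p hl] at h2
  linarith

lemma A_zero {l : ℝ} (hl : 0 < l) : (1 - Real.exp (-l)) * A l 0 = 1 := by
  have h : ∀ m : ℕ, Real.exp (-l * m) * (l * m) ^ 0 / (Nat.factorial 0) = (Real.exp (-l)) ^ m := by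
    intro m
    rw [show (-l * m : ℝ) = m * (-l) by ring, Real.exp_nat_mul]
    simp
  rw [A, tsum_congr h, tsum_geometric_of_lt_one (Real.exp_pos _).le (exp_neg_lt_one hl)]
  have : (1 : ℝ) - Real.exp (-l) ≠ 0 := by
    have := exp_neg_lt_one hl; linarith
  field_simp

lemma A_shift {l : ℝ} (hl : 0 < l) {k : ℕ} (hk : 1 ≤ k) :
    A l k = ∑' m : ℕ, Real.exp (-l * (m + 1)) * (l * (m + 1)) ^ k / k.factorial := by
  rw [A, Summable.tsum_eq_zero_add (summable_base hl k)]
  have h0 : Real.exp (-l * (0:ℕ)) * (l * (0:ℕ)) ^ k / k.factorial = 0 := by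
    simp [zero_pow (by omega : k ≠ 0)]
  rw [h0, zero_add]
  refine tsum_congr fun m => ?_
  push_cast
  ring_nf

/-- Renewal recursion coming from the binomial theorem. -/
lemma A_rec {l : ℝ} (hl : 0 < l) {k : ℕ} (hk : 1 ≤ k) :
    A l k = ∑ i ∈ Finset.range (k + 1), p l (k - i) * A l i := by
  have key : ∀ m : ℕ, Real.exp (-l * (m + 1)) * (l * (m + 1)) ^ k / k.factorial
      = ∑ i ∈ Finset.range (k + 1),
          p l (k - i) * (Real.exp (-l * m) * (l * m) ^ i / i.factorial) := by
    intro m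
    have hexp : Real.exp (-l * (m + 1)) = Real.exp (-l * m) * Real.exp (-l) := by
      rw [← Real.exp_add]; ring_nf
    have hbin : (l * ((m : ℝ) + 1)) ^ k
        = ∑ i ∈ Finset.range (k + 1), (l * m) ^ i * l ^ (k - i) * (k.choose i : ℝ) := by
      rw [show l * ((m : ℝ) + 1) = l * m + l by ring, add_pow]
    rw [hexp, hbin, Finset.mul_sum, Finset.sum_div]
    refine Finset.sum_congr rfl fun i hi => ?_
    have hik : i ≤ k := by
      have := Finset.mem_range.mp hi; omega
    have hfact : ((k.choose i : ℝ) * i.factorial * (k - i).factorial) = (k.factorial : ℝ) := by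
      exact_mod_cast congrArg (Nat.cast : ℕ → ℝ)
        (Nat.choose_mul_factorial_mul_factorial hik)
    have hkf : (k.factorial : ℝ) ≠ 0 := Nat.cast_ne_zero.mpr k.factorial_ne_zero
    have hif : (i.factorial : ℝ) ≠ 0 := Nat.cast_ne_zero.mpr i.factorial_ne_zero
    have hkif : ((k - i).factorial : ℝ) ≠ 0 := Nat.cast_ne_zero.mpr (k - i).factorial_ne_zero
    have hch : (k.choose i : ℝ) ≠ 0 := Nat.cast_ne_zero.mpr (Nat.choose_pos hik).ne'
    unfold p
    rw [← hfact]
    field_simp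
  rw [A_shift hl hk, tsum_congr key,
    Summable.tsum_finsetSum (fun i _ => ((summable_base hl i).mul_left _))]
  refine Finset.sum_congr rfl fun i _ => ?_
  rw [tsum_mul_left, A]

lemma main {l : ℝ} (hl : 0 < l) : ∀ k : ℕ, 1 ≤ k → (1 - Real.exp (-l)) * A l k < 1 := by
  intro k
  induction k using Nat.strong_induction_on with
  | _ k IH =>
    intro hk
    have hr1 : Real.exp (-l) < 1 := exp_neg_lt_one hl
    have hr0 : (0 : ℝ) < 1 - Real.exp (-l) := by linarith
    have hrec := A_rec hl hk
    rw [Finset.sum_range_succ] at hrec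
    have hp0 : p l (k - k) = Real.exp (-l) := by
      simp [p]
    rw [hp0] at hrec
    -- (1 - r) * A k = ∑ i in range k, p (k-i) * A i
    have heq : (1 - Real.exp (-l)) * A l k
        = ∑ i ∈ Finset.range k, p l (k - i) * A l i := by
      nlinarith [hrec]
    -- multiply by (1 - r) and bound each (1-r) * A i ≤ 1
    have hbound : ∀ i ∈ Finset.range k, p l (k - i) * ((1 - Real.exp (-l)) * A l i)
        ≤ p l (k - i) * 1 := by
      intro i hi
      have hik : i < k := Finset.mem_range.mp hi
      have h1 : (1 - Real.exp (-l)) * A l i ≤ 1 := by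
        rcases Nat.eq_zero_or_pos i with h | h
        · rw [h, A_zero hl]
        · exact (IH i hik h).le
      exact mul_le_mul_of_nonneg_left h1 (p_pos hl _).le
    have hmul : (1 - Real.exp (-l)) * ((1 - Real.exp (-l)) * A l k)
        = ∑ i ∈ Finset.range k, p l (k - i) * ((1 - Real.exp (-l)) * A l i) := by
      rw [heq, Finset.mul_sum]
      exact Finset.sum_congr rfl fun i _ => by ring
    have hsum1 : ∑ i ∈ Finset.range k, p l (k - i) = ∑ i ∈ Finset.range k, p l (i + 1) := by
      rw [← Finset.sum_range_reflect (fun j => p l (j + 1)) k]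
      refine Finset.sum_congr rfl fun i hi => ?_
      have := Finset.mem_range.mp hi
      congr 1
      omega
    have hsum2 : ∑ i ∈ Finset.range k, p l (i + 1)
        = (∑ i ∈ Finset.range (k + 1), p l i) - p l 0 := by
      rw [Finset.sum_range_succ' (fun i => p l i) k]
      ring
    have hsum3 : ∑ i ∈ Finset.range k, p l (k - i) < 1 - Real.exp (-l) := by
      rw [hsum1, hsum2]
      have := psum_lt hl k
      have hp00 : p l 0 = Real.exp (-l) := by simp [p]
      rw [hp00]
      linarith
    have : (1 - Real.exp (-l)) * ((1 - Real.exp (-l)) * A l k) < 1 - Real.exp (-l) := by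
      calc (1 - Real.exp (-l)) * ((1 - Real.exp (-l)) * A l k)
          = ∑ i ∈ Finset.range k, p l (k - i) * ((1 - Real.exp (-l)) * A l i) := hmul
        _ ≤ ∑ i ∈ Finset.range k, p l (k - i) * 1 := Finset.sum_le_sum hbound
        _ = ∑ i ∈ Finset.range k, p l (k - i) := by simp
        _ < 1 - Real.exp (-l) := hsum3
    nlinarith [this]

end IterPoissonAux

/-- `Pr{T_k < ∞} = e^{−λ_α} (λ_α^k/k!) Σ_{j=0}^∞ e^{−λ_α j}((j+1)^k − j^k) < 1`,
so the first-passage time of the iterated Poisson process at level `k ≥ 1` is infinite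
with positive probability. -/
theorem iterated_poisson_hitting_defective (lα : ℝ) (hα : 0 < lα) (k : ℕ) (hk : 1 ≤ k) :
    Real.exp (-lα) * (lα ^ k / (Nat.factorial k)) *
      ∑' j : ℕ, Real.exp (-lα * j) * (((j : ℝ) + 1) ^ k - (j : ℝ) ^ k) < 1 := by
  classical
  open IterPoissonAux in
  -- v j = e^{-l j} j^k , u j = e^{-l j} (j+1)^k
  set r := Real.exp (-lα) with hr
  have hr1 : r < 1 := exp_neg_lt_one hα
  have hrpos : 0 < r := Real.exp_pos _
  have hv : Summable (fun j : ℕ => Real.exp (-lα * j) * (j : ℝ) ^ k) := by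
    have := summable_base hα k
    have h := this.mul_left ((k.factorial : ℝ) / lα ^ k)
    refine h.congr fun m => ?_
    have hlk : (lα : ℝ) ^ k ≠ 0 := pow_ne_zero _ (ne_of_gt hα)
    have hkf : (k.factorial : ℝ) ≠ 0 := Nat.cast_ne_zero.mpr k.factorial_ne_zero
    rw [mul_pow]
    field_simp
  have hu : Summable (fun j : ℕ => Real.exp (-lα * j) * ((j : ℝ) + 1) ^ k) := by
    have hshift : Summable (fun j : ℕ => Real.exp (-lα * (j + 1)) * ((j : ℝ) + 1) ^ k) := by
      have := (summable_nat_add_iff 1).mpr hv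
      refine this.congr fun j => ?_
      push_cast
      ring_nf
    have := hshift.mul_left (Real.exp lα)
    refine this.congr fun j => ?_
    rw [← mul_assoc, ← Real.exp_add]
    ring_nf
  -- split the tsum
  have hsplit : ∑' j : ℕ, Real.exp (-lα * j) * (((j : ℝ) + 1) ^ k - (j : ℝ) ^ k)
      = (∑' j : ℕ, Real.exp (-lα * j) * ((j : ℝ) + 1) ^ k)
        - ∑' j : ℕ, Real.exp (-lα * j) * (j : ℝ) ^ k := by
    rw [← Summable.tsum_sub hu hv]
    exact tsum_congr fun j => by ring
  set W := ∑' j : ℕ, Real.exp (-lα * (j + 1)) * ((j : ℝ) + 1) ^ k with hW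
  have hvW : ∑' j : ℕ, Real.exp (-lα * j) * (j : ℝ) ^ k = W := by
    rw [Summable.tsum_eq_zero_add hv]
    have h0 : Real.exp (-lα * (0:ℕ)) * ((0:ℕ) : ℝ) ^ k = 0 := by
      simp [zero_pow (by omega : k ≠ 0)]
    rw [h0, zero_add]
    exact tsum_congr fun j => by push_cast; ring_nf
  have huW : ∑' j : ℕ, Real.exp (-lα * j) * ((j : ℝ) + 1) ^ k = Real.exp lα * W := by
    rw [hW, ← tsum_mul_left]
    exact tsum_congr fun j => by
      rw [← mul_assoc, ← Real.exp_add]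
      ring_nf
  have hAW : A lα k = (lα ^ k / k.factorial) * W := by
    rw [A_shift hα hk, hW, ← tsum_mul_left]
    exact tsum_congr fun j => by
      rw [mul_pow]
      ring
  have hgoal : Real.exp (-lα) * (lα ^ k / (Nat.factorial k)) *
      ∑' j : ℕ, Real.exp (-lα * j) * (((j : ℝ) + 1) ^ k - (j : ℝ) ^ k)
      = (1 - r) * A lα k := by
    rw [hsplit, huW, hvW, hAW, hr]
    have : Real.exp (-lα) * Real.exp lα = 1 := by
      rw [← Real.exp_add]; simp
    linear_combination (lα ^ k / (k.factorial : ℝ) * W) * this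
  rw [hgoal]
  exact main hα k hk
end

section
/- Let ν ∈ (0,1], λ_β > 0, k ≥ 1 an integer, and μ > 0 with μ^ν > λ_β. Then the Laplace transform of the first-passage time density of the fractional Poisson process equals ∫_0^∞ e^{−μ s} · λ_β^k Σ_{j=0}^∞ (−1)^j C(k+j−1, j) λ_β^j · s^{ν(k+j)−1} / Γ(ν(k+j)) ds = (μ^ν/λ_β + 1)^{−k}. -/
open Real

open MeasureTheory Set in
private lemma integrableOn_rpow_mul_exp_neg_mul_Ioi' {a r : ℝ} (ha : 0 < a) (hr : 0 < r) :
    IntegrableOn (fun t : ℝ => t ^ (a - 1) * Real.exp (-(r * t))) (Ioi 0) := by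
  have h0 : IntegrableOn (fun t : ℝ => Real.exp (-t) * t ^ (a - 1)) (Ioi 0) :=
    Real.GammaIntegral_convergent ha
  have h1 : IntegrableOn
      (fun t : ℝ => Real.exp (-(r * t)) * (r * t) ^ (a - 1)) (Ioi 0) := by
    have := (MeasureTheory.integrableOn_Ioi_comp_mul_left_iff
      (fun t : ℝ => Real.exp (-t) * t ^ (a - 1)) 0 hr).2
    simpa [mul_zero] using this (by simpa using h0)
  have h2 : IntegrableOn
      (fun t : ℝ => ((r : ℝ) ^ (a - 1))⁻¹ * (Real.exp (-(r * t)) * (r * t) ^ (a - 1)))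
      (Ioi 0) := h1.const_mul _
  refine MeasureTheory.IntegrableOn.congr_fun h2 (fun t ht => ?_) measurableSet_Ioi
  have hrt : (r * t) ^ (a - 1) = r ^ (a - 1) * t ^ (a - 1) :=
    Real.mul_rpow hr.le (le_of_lt ht)
  have hrne : r ^ (a - 1) ≠ 0 := (Real.rpow_pos_of_pos hr _).ne'
  rw [hrt]
  field_simp

/-- the Laplace transform of the first-passage time density of the
fractional Poisson process:
`∫_0^∞ e^{−μs} λ_β^k Σ_j (−1)^j C(k+j−1,j) λ_β^j s^{ν(k+j)−1}/Γ(ν(k+j)) ds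
 = (μ^ν/λ_β + 1)^{−k}`. -/
theorem laplace_fractional_poisson_hitting (ν lβ μ : ℝ) (hν : ν ∈ Set.Ioc (0 : ℝ) 1)
    (hβ : 0 < lβ) (k : ℕ) (hk : 1 ≤ k) (hμ : 0 < μ) (hcond : lβ < μ ^ ν) :
    ∫ s in Set.Ioi (0 : ℝ), Real.exp (-μ * s) *
      (lβ ^ k * ∑' j : ℕ, (-1 : ℝ) ^ j * ((k + j - 1).choose j : ℝ) * lβ ^ j *
        s ^ (ν * ((k : ℝ) + j) - 1) / Real.Gamma (ν * ((k : ℝ) + j))) =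
    (μ ^ ν / lβ + 1) ^ (-(k : ℤ)) := by
  obtain ⟨hν0, hν1⟩ := hν
  have hμν : 0 < μ ^ ν := Real.rpow_pos_of_pos hμ ν
  set x : ℝ := lβ / μ ^ ν with hxdef
  have hx0 : 0 < x := div_pos hβ hμν
  have hx1 : x < 1 := (div_lt_one hμν).2 hcond
  -- the exponents
  set a : ℕ → ℝ := fun j => ν * ((k : ℝ) + j) with hadef
  have hapos : ∀ j : ℕ, 0 < a j := by
    intro j
    have : (0:ℝ) < (k : ℝ) + j := by positivity
    exact mul_pos hν0 this
  have hΓpos : ∀ j : ℕ, 0 < Real.Gamma (a j) := fun j => Real.Gamma_pos_of_pos (hapos j)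
  -- the summands
  set F : ℕ → ℝ → ℝ := fun j s => Real.exp (-μ * s) *
      (lβ ^ k * ((-1 : ℝ) ^ j * ((k + j - 1).choose j : ℝ) * lβ ^ j *
        s ^ (a j - 1) / Real.Gamma (a j))) with hFdef
  -- binomial coefficient rewriting
  have hchoose : ∀ j : ℕ, ((k + j - 1).choose j : ℝ) = ((j + (k-1)).choose (k-1) : ℝ) := by
    intro j
    have h1 : k + j - 1 = j + (k - 1) := by omega
    have h2 : (j + (k-1)).choose (k-1) = (j + (k-1)).choose j := by
      have := Nat.choose_symm (Nat.le_add_right j (k-1))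
      simpa [Nat.add_sub_cancel_left] using this
    rw [h1, h2]
  -- rpow computation
  have hpow : ∀ j : ℕ, (1/μ) ^ (a j) = ((μ ^ ν)⁻¹) ^ (k + j) := by
    intro j
    have h1 : (1/μ : ℝ) ^ (a j) = (μ ^ (a j))⁻¹ := by
      rw [one_div, Real.inv_rpow hμ.le]
    have h2 : ((μ ^ ν)⁻¹) ^ (k + j) = (μ ^ (a j))⁻¹ := by
      rw [inv_pow, ← Real.rpow_natCast (μ ^ ν) (k+j), ← Real.rpow_mul hμ.le]
      congr 2
      push_cast [hadef]
      ring
    rw [h1, h2]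
  -- value of each integral
  have hGval : ∀ j : ℕ, ∫ s in Set.Ioi (0:ℝ), s ^ (a j - 1) * Real.exp (-(μ * s))
      = (1/μ) ^ (a j) * Real.Gamma (a j) :=
    fun j => integral_rpow_mul_exp_neg_mul_Ioi (hapos j) hμ
  have hGint : ∀ j : ℕ, MeasureTheory.IntegrableOn
      (fun s : ℝ => s ^ (a j - 1) * Real.exp (-(μ * s))) (Set.Ioi 0) :=
    fun j => integrableOn_rpow_mul_exp_neg_mul_Ioi' (hapos j) hμ
  -- constants
  set D : ℕ → ℝ := fun j => lβ ^ k * ((-1 : ℝ) ^ j * ((k + j - 1).choose j : ℝ) * lβ ^ j)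
      / Real.Gamma (a j) with hDdef
  have hFeq : ∀ j : ℕ, F j = fun s => D j * (s ^ (a j - 1) * Real.exp (-(μ * s))) := by
    intro j
    funext s
    simp only [hFdef, hDdef, neg_mul]
    ring
  have hFint : ∀ j : ℕ, MeasureTheory.Integrable (F j)
      (MeasureTheory.volume.restrict (Set.Ioi 0)) := by
    intro j
    rw [hFeq j]
    exact (hGint j).const_mul (D j)
  have hFval : ∀ j : ℕ, (∫ s in Set.Ioi (0:ℝ), F j s)
      = D j * ((1/μ) ^ (a j) * Real.Gamma (a j)) := by
    intro j
    rw [hFeq j, MeasureTheory.integral_const_mul, hGval j]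
  -- norms
  have hE : ∀ j : ℕ, (∫ s in Set.Ioi (0:ℝ), ‖F j s‖)
      = (lβ ^ k * (((k + j - 1).choose j : ℝ) * lβ ^ j) / Real.Gamma (a j))
        * ((1/μ) ^ (a j) * Real.Gamma (a j)) := by
    intro j
    have heq : ∀ s ∈ Set.Ioi (0:ℝ), ‖F j s‖
        = (lβ ^ k * (((k + j - 1).choose j : ℝ) * lβ ^ j) / Real.Gamma (a j))
          * (s ^ (a j - 1) * Real.exp (-(μ * s))) := by
      intro s hs
      rw [hFeq j]
      have hg : (0:ℝ) ≤ s ^ (a j - 1) * Real.exp (-(μ * s)) :=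
        mul_nonneg (Real.rpow_nonneg (le_of_lt hs) _) (Real.exp_nonneg _)
      rw [Real.norm_eq_abs, abs_mul, abs_of_nonneg hg]
      congr 1
      rw [hDdef]
      simp only [abs_div, abs_mul, abs_pow, abs_neg, abs_one, one_pow, one_mul,
        abs_of_pos hβ, abs_of_pos (hΓpos j), Nat.abs_cast]
    rw [MeasureTheory.setIntegral_congr_fun measurableSet_Ioi heq,
      MeasureTheory.integral_const_mul, hGval j]
  -- summability of norms
  have hxval : lβ * (μ ^ ν)⁻¹ = x := by rw [hxdef, div_eq_mul_inv]
  have hEx : ∀ j : ℕ, (lβ ^ k * (((k + j - 1).choose j : ℝ) * lβ ^ j) / Real.Gamma (a j))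
      * ((1/μ) ^ (a j) * Real.Gamma (a j))
      = x ^ k * ((((j + (k-1)).choose (k-1)) : ℝ) * x ^ j) := by
    intro j
    have hΓ : Real.Gamma (a j) ≠ 0 := (hΓpos j).ne'
    rw [hpow j, hchoose j, hxdef, inv_pow, div_pow, div_pow]
    field_simp
    ring_nf
  have hxnorm : ‖x‖ < 1 := by rwa [Real.norm_eq_abs, abs_of_pos hx0]
  have hsum : Summable (fun j : ℕ => ∫ s in Set.Ioi (0:ℝ), ‖F j s‖) := by
    have h1 : Summable (fun j : ℕ => (((j + (k-1)).choose (k-1)) : ℝ) * x ^ j) :=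
      summable_choose_mul_geometric_of_norm_lt_one (k-1) hxnorm
    have h2 := h1.mul_left (x ^ k)
    refine h2.congr fun j => ?_
    rw [hE j, hEx j]
  -- swap integral and sum
  have hswap : (∑' j : ℕ, ∫ s in Set.Ioi (0:ℝ), F j s)
      = ∫ s in Set.Ioi (0:ℝ), ∑' j : ℕ, F j s :=
    MeasureTheory.integral_tsum_of_summable_integral_norm hFint hsum
  -- rewrite integrand
  have hpt : ∀ s : ℝ, Real.exp (-μ * s) *
      (lβ ^ k * ∑' j : ℕ, (-1 : ℝ) ^ j * ((k + j - 1).choose j : ℝ) * lβ ^ j *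
        s ^ (ν * ((k : ℝ) + j) - 1) / Real.Gamma (ν * ((k : ℝ) + j)))
      = ∑' j : ℕ, F j s := by
    intro s
    rw [← tsum_mul_left, ← tsum_mul_left]
  calc ∫ s in Set.Ioi (0 : ℝ), Real.exp (-μ * s) *
      (lβ ^ k * ∑' j : ℕ, (-1 : ℝ) ^ j * ((k + j - 1).choose j : ℝ) * lβ ^ j *
        s ^ (ν * ((k : ℝ) + j) - 1) / Real.Gamma (ν * ((k : ℝ) + j)))
      = ∫ s in Set.Ioi (0:ℝ), ∑' j : ℕ, F j s := by
        exact MeasureTheory.setIntegral_congr_fun measurableSet_Ioi (fun s _ => hpt s)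
    _ = ∑' j : ℕ, ∫ s in Set.Ioi (0:ℝ), F j s := hswap.symm
    _ = ∑' j : ℕ, x ^ k * ((((j + (k-1)).choose (k-1)) : ℝ) * (-x) ^ j) := by
        refine tsum_congr fun j => ?_
        rw [hFval j]
        simp only [hDdef]
        rw [hpow j, hchoose j, neg_pow x j, hxdef, inv_pow, div_pow, div_pow]
        have hΓ : Real.Gamma (a j) ≠ 0 := (hΓpos j).ne'
        field_simp
        ring
    _ = x ^ k * (1 / (1 - (-x)) ^ ((k-1) + 1)) := by
        rw [tsum_mul_left]
        congr 1
        have hnx : ‖(-x : ℝ)‖ < 1 := by rwa [norm_neg]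
        exact tsum_choose_mul_geometric_of_norm_lt_one (k-1) hnx
    _ = (μ ^ ν / lβ + 1) ^ (-(k : ℤ)) := by
        have hk1 : (k - 1) + 1 = k := by omega
        rw [hk1, sub_neg_eq_add, zpow_neg, zpow_natCast]
        have hb : (0:ℝ) < μ ^ ν / lβ + 1 := by positivity
        rw [← inv_pow, mul_one_div, div_pow, ← div_pow]
        congr 1
        rw [hxdef]
        field_simp
        rw [← mul_pow, div_mul_div_comm, mul_comm (μ ^ ν + lβ) lβ,
          mul_div_mul_right _ _ (add_pos hμν hβ).ne']
end

section
/- Let ν ∈ (0,1], λ_α, λ_β > 0 with λ_β < λ_α^ν, and let k ≥ 1, r ≥ 0 be integers. Then ∫_0^∞ e^{−λ_α s} (λ_α s)^r / r! · λ_β^k Σ_{j=0}^∞ (−1)^j C(k+j−1, j) λ_β^j s^{ν(k+j)−1} / Γ(ν(k+j)) ds = (1/r!) Σ_{j=0}^∞ (−1)^j C(k+j−1, j) (λ_β/λ_α^ν)^{k+j} · Γ(ν(k+j)+r) / Γ(ν(k+j)); that is, the composition Ñ^ν(k) = N_α(τ_k^ν) of a homogeneous Poisson process with the first-passage time of an independent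 fractional Poisson process has distribution Pr{Ñ^ν(k) = r} given by the right-hand side. -/
open Real MeasureTheory Set

lemma aux_gamma_add_nat {a : ℝ} (ha : 0 < a) (n : ℕ) :
    Real.Gamma (a + n) = Real.Gamma a * ∏ i ∈ Finset.range n, (a + i) := by
  induction n with
  | zero => simp
  | succ n ih =>
    have h1 : (a + (n + 1 : ℕ) : ℝ) = (a + n) + 1 := by push_cast; ring
    rw [h1, Real.Gamma_add_one (by positivity), ih, Finset.prod_range_succ]
    ring

lemma aux_integrableOn {a b : ℝ} (ha : 0 < a) (hb : 0 < b) :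
    IntegrableOn (fun s : ℝ => Real.exp (-(b * s)) * s ^ (a - 1)) (Set.Ioi 0) := by
  have h2 : IntegrableOn (fun x : ℝ =>
      Real.exp (-(b * x)) * (b * x) ^ (a - 1)) (Ioi 0) := by
    have := (integrableOn_Ioi_comp_mul_left_iff
      (fun x : ℝ => Real.exp (-x) * x ^ (a - 1)) 0 hb).2
      (by simpa using Real.GammaIntegral_convergent ha)
    simpa using this
  have h3 : IntegrableOn (fun x : ℝ =>
      ((b : ℝ) ^ (a - 1))⁻¹ * (Real.exp (-(b * x)) * (b * x) ^ (a - 1))) (Ioi 0) :=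
    h2.const_mul _
  refine IntegrableOn.congr_fun h3 (fun x hx => ?_) measurableSet_Ioi
  rw [Real.mul_rpow hb.le (le_of_lt hx)]
  field_simp [(Real.rpow_pos_of_pos hb (a-1)).ne']

lemma aux_integral_val {a b : ℝ} (ha : 0 < a) (hb : 0 < b) :
    ∫ s in Set.Ioi (0 : ℝ), Real.exp (-(b * s)) * s ^ (a - 1)
      = Real.Gamma a / b ^ a := by
  rw [MeasureTheory.setIntegral_congr_fun measurableSet_Ioi
    (fun s _ => mul_comm (Real.exp (-(b * s))) (s ^ (a - 1))),
    Real.integral_rpow_mul_exp_neg_mul_Ioi ha hb, one_div,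
    Real.inv_rpow hb.le, div_eq_mul_inv, mul_comm]

/-- the distribution of the composition `Ñ^ν(k) = N_α(τ_k^ν)` of a Poisson
process with the first-passage time of an independent fractional Poisson process:
`∫_0^∞ e^{−λ_α s}(λ_α s)^r/r! · f_k^ν(s) ds
 = (1/r!) Σ_j (−1)^j C(k+j−1,j) (λ_β/λ_α^ν)^{k+j} Γ(ν(k+j)+r)/Γ(ν(k+j))`. -/
theorem poisson_at_fractional_hitting_distribution (ν lα lβ : ℝ)
    (hν : ν ∈ Set.Ioc (0 : ℝ) 1) (hα : 0 < lα) (hβ : 0 < lβ) (hcond : lβ < lα ^ ν)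
    (k r : ℕ) (hk : 1 ≤ k) :
    ∫ s in Set.Ioi (0 : ℝ), Real.exp (-lα * s) * (lα * s) ^ r / (Nat.factorial r) *
      (lβ ^ k * ∑' j : ℕ, (-1 : ℝ) ^ j * ((k + j - 1).choose j : ℝ) * lβ ^ j *
        s ^ (ν * ((k : ℝ) + j) - 1) / Real.Gamma (ν * ((k : ℝ) + j))) =
    (1 / (Nat.factorial r : ℝ)) *
      ∑' j : ℕ, (-1 : ℝ) ^ j * ((k + j - 1).choose j : ℝ) * (lβ / lα ^ ν) ^ (k + j) *
        Real.Gamma (ν * ((k : ℝ) + j) + r) / Real.Gamma (ν * ((k : ℝ) + j)) := by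
  obtain ⟨hν0, hν1⟩ := hν
  have hlαν : 0 < lα ^ ν := Real.rpow_pos_of_pos hα ν
  have hx0 : 0 < lβ / lα ^ ν := div_pos hβ hlαν
  have hx1 : lβ / lα ^ ν < 1 := (div_lt_one hlαν).2 hcond
  have hk1 : (1 : ℝ) ≤ (k : ℝ) := by exact_mod_cast hk
  set x : ℝ := lβ / lα ^ ν with hxdef
  set p : ℕ → ℝ := fun j => ν * ((k : ℝ) + j) with hpdef
  set C : ℕ → ℝ := fun j => ((k + j - 1).choose j : ℝ) with hCdef
  have hp : ∀ j : ℕ, 0 < p j := fun j => by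
    have h0 : (0:ℝ) ≤ (j:ℝ) := Nat.cast_nonneg j
    simp only [hpdef]
    exact mul_pos hν0 (by linarith)
  have hq : ∀ j : ℕ, 0 < p j + (r : ℝ) := fun j =>
    add_pos_of_pos_of_nonneg (hp j) (Nat.cast_nonneg r)
  have hΓp : ∀ j : ℕ, 0 < Real.Gamma (p j) := fun j => Real.Gamma_pos_of_pos (hp j)
  have hΓq : ∀ j : ℕ, 0 < Real.Gamma (p j + (r:ℝ)) := fun j => Real.Gamma_pos_of_pos (hq j)
  have hfac : (0:ℝ) < (Nat.factorial r : ℝ) := by exact_mod_cast (Nat.factorial_pos r)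
  set G : ℕ → ℝ → ℝ := fun j s =>
    Real.exp (-lα * s) * (lα * s) ^ r / (Nat.factorial r) *
      (lβ ^ k * ((-1 : ℝ) ^ j * C j * lβ ^ j * s ^ (p j - 1) / Real.Gamma (p j)))
    with hGdef
  set K : ℕ → ℝ := fun j =>
    lα ^ r / (Nat.factorial r) * lβ ^ k *
      ((-1 : ℝ) ^ j * C j * lβ ^ j / Real.Gamma (p j)) with hKdef
  -- pointwise representation of G on (0, ∞)
  have hGrep : ∀ j : ℕ, ∀ s ∈ Ioi (0:ℝ), G j s
      = K j * (Real.exp (-(lα * s)) * s ^ (p j + (r:ℝ) - 1)) := by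
    intro j s hs
    have hs0 : (0:ℝ) < s := hs
    have hpow : s ^ (p j + (r:ℝ) - 1) = s ^ (r:ℕ) * s ^ (p j - 1) := by
      rw [← Real.rpow_natCast s r, ← Real.rpow_add hs0]
      congr 1; ring
    simp only [hGdef, hKdef, neg_mul]
    rw [hpow, mul_pow]
    field_simp
  -- integrability
  have hGint : ∀ j : ℕ, IntegrableOn (G j) (Ioi (0:ℝ)) := by
    intro j
    exact IntegrableOn.congr_fun
      ((aux_integrableOn (hq j) hα).const_mul (K j))
      (fun s hs => (hGrep j s hs).symm) measurableSet_Ioi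
  -- value of the integral of G j
  have hGval : ∀ j : ℕ, (∫ s in Ioi (0:ℝ), G j s)
      = K j * (Real.Gamma (p j + (r:ℝ)) / lα ^ (p j + (r:ℝ))) := by
    intro j
    rw [MeasureTheory.setIntegral_congr_fun measurableSet_Ioi (hGrep j),
      MeasureTheory.integral_const_mul, aux_integral_val (hq j) hα]
  -- value of the integral of ‖G j‖
  have hGnorm : ∀ j : ℕ, (∫ s in Ioi (0:ℝ), ‖G j s‖)
      = |K j| * (Real.Gamma (p j + (r:ℝ)) / lα ^ (p j + (r:ℝ))) := by
    intro j
    have heq : ∀ s ∈ Ioi (0:ℝ), ‖G j s‖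
        = |K j| * (Real.exp (-(lα * s)) * s ^ (p j + (r:ℝ) - 1)) := by
      intro s hs
      have hs0 : (0:ℝ) < s := hs
      rw [Real.norm_eq_abs, hGrep j s hs, abs_mul,
        abs_of_pos (mul_pos (Real.exp_pos _) (Real.rpow_pos_of_pos hs0 _))]
    rw [MeasureTheory.setIntegral_congr_fun measurableSet_Ioi heq,
      MeasureTheory.integral_const_mul, aux_integral_val (hq j) hα]
  -- power simplifications
  have hlαp : ∀ j : ℕ, lα ^ (p j) = (lα ^ ν) ^ (k + j) := by
    intro j
    rw [show p j = ν * (((k + j : ℕ) : ℝ)) by simp only [hpdef]; push_cast; ring,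
      Real.rpow_mul hα.le, Real.rpow_natCast]
  have h2 : ∀ j : ℕ, lα ^ (p j + (r:ℝ)) = (lα ^ ν) ^ (k + j) * lα ^ r := by
    intro j
    rw [Real.rpow_add hα, hlαp j, Real.rpow_natCast]
  have hxkj : ∀ j : ℕ, x ^ (k + j) = lβ ^ k * lβ ^ j / (lα ^ ν) ^ (k + j) := by
    intro j
    rw [hxdef, div_pow, pow_add]
  -- algebraic identity for the value of each integral
  have halg : ∀ (c : ℝ) (j : ℕ),
      (lα ^ r / (Nat.factorial r) * lβ ^ k * (c * lβ ^ j / Real.Gamma (p j))) *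
        (Real.Gamma (p j + (r:ℝ)) / lα ^ (p j + (r:ℝ)))
      = (1 / (Nat.factorial r : ℝ)) *
          (c * x ^ (k + j) * Real.Gamma (p j + (r:ℝ)) / Real.Gamma (p j)) := by
    intro c j
    rw [h2 j, hxkj j]
    have hαν : ((lα ^ ν) ^ (k + j) : ℝ) ≠ 0 := (pow_pos hlαν _).ne'
    have hlαr : (lα : ℝ) ^ r ≠ 0 := (pow_pos hα r).ne'
    field_simp
  have hratio : ∀ j : ℕ, Real.Gamma (p j + (r:ℝ)) / Real.Gamma (p j)
      = ∏ i ∈ Finset.range r, (p j + i) := by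
    intro j
    rw [aux_gamma_add_nat (hp j) r, mul_div_cancel_left₀ _ (hΓp j).ne']
  have hKabs : ∀ j : ℕ, |K j|
      = lα ^ r / (Nat.factorial r) * lβ ^ k * (C j * lβ ^ j / Real.Gamma (p j)) := by
    intro j
    have hCj : (0:ℝ) ≤ C j := by simp only [hCdef]; exact Nat.cast_nonneg _
    have habs : |(-1 : ℝ) ^ j * C j * lβ ^ j / Real.Gamma (p j)|
        = C j * lβ ^ j / Real.Gamma (p j) := by
      rw [abs_div, abs_mul, abs_mul, abs_pow, abs_neg, abs_one, one_pow, one_mul,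
        abs_of_nonneg hCj, abs_of_pos (pow_pos hβ j), abs_of_pos (hΓp j)]
    simp only [hKdef]
    rw [abs_mul, habs,
      abs_of_pos (mul_pos (div_pos (pow_pos hα r) hfac) (pow_pos hβ k))]
  have hintval : ∀ j : ℕ, (∫ s in Ioi (0:ℝ), G j s)
      = (1 / (Nat.factorial r : ℝ)) *
          ((-1:ℝ) ^ j * C j * x ^ (k + j) * Real.Gamma (p j + (r:ℝ)) / Real.Gamma (p j)) := by
    intro j
    rw [hGval j]
    simp only [hKdef]
    exact halg _ j
  have hnormval : ∀ j : ℕ, (∫ s in Ioi (0:ℝ), ‖G j s‖)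
      = (1 / (Nat.factorial r : ℝ)) *
          (C j * x ^ (k + j) * Real.Gamma (p j + (r:ℝ)) / Real.Gamma (p j)) := by
    intro j
    rw [hGnorm j, hKabs j]
    exact halg _ j
  -- summability
  have hmaj : Summable (fun j : ℕ => ((j:ℝ) + 1) ^ (k + r) * x ^ j) := by
    have h0 : Summable (fun n : ℕ => (n:ℝ) ^ (k + r) * x ^ n) :=
      summable_pow_mul_geometric_of_norm_lt_one (k + r)
        (by rw [Real.norm_eq_abs, abs_of_pos hx0]; exact hx1)
    have h1 := (summable_nat_add_iff 1).2 h0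
    refine (h1.mul_left x⁻¹).congr fun n => ?_
    push_cast
    rw [pow_succ]
    field_simp
  set D : ℝ := x ^ k * ((k + r : ℕ) : ℝ) ^ (k + r) with hDdef
  have hbound : ∀ j : ℕ,
      (1 / (Nat.factorial r : ℝ)) *
        (C j * x ^ (k + j) * Real.Gamma (p j + (r:ℝ)) / Real.Gamma (p j))
      ≤ D * (((j:ℝ) + 1) ^ (k + r) * x ^ j) := by
    intro j
    have hCj : (0:ℝ) ≤ C j := by simp only [hCdef]; exact Nat.cast_nonneg _
    have hCP : C j * (Real.Gamma (p j + (r:ℝ)) / Real.Gamma (p j))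
        ≤ ((k + r : ℕ) : ℝ) ^ (k + r) * ((j:ℝ) + 1) ^ (k + r) := by
      rw [hratio j]
      set n : ℝ := ((k + j + r : ℕ) : ℝ) with hndef
      have hn1 : (1:ℝ) ≤ n := by
        rw [hndef]; exact_mod_cast (by omega : 1 ≤ k + j + r)
      have hC : C j ≤ n ^ (k - 1) := by
        have e1 : (k + j - 1).choose j = (k + j - 1).choose (k - 1) := by
          rw [← Nat.choose_symm (by omega : k - 1 ≤ k + j - 1)]
          congr 1; omega
        have e2 : (k + j - 1).choose (k - 1) ≤ (k + j + r) ^ (k - 1) :=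
          calc (k + j - 1).choose (k - 1) ≤ (k + j - 1) ^ (k - 1) :=
                Nat.choose_le_pow _ _
            _ ≤ (k + j + r) ^ (k - 1) := Nat.pow_le_pow_left (by omega) _
        have e3 : (k + j - 1).choose j ≤ (k + j + r) ^ (k - 1) := e1 ▸ e2
        simp only [hCdef, hndef]
        exact_mod_cast e3
      have hprodle : ∏ i ∈ Finset.range r, (p j + i) ≤ n ^ r := by
        calc ∏ i ∈ Finset.range r, (p j + i)
            ≤ ∏ _i ∈ Finset.range r, n := by
              refine Finset.prod_le_prod
                (fun i _ => add_nonneg (hp j).le (Nat.cast_nonneg i)) (fun i hi => ?_)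
              have hi' : (i:ℝ) ≤ (r:ℝ) := by
                exact_mod_cast (Finset.mem_range.mp hi).le
              have hj0 : (0:ℝ) ≤ (j:ℝ) := Nat.cast_nonneg j
              have hpj : p j ≤ (k:ℝ) + j := by
                simp only [hpdef]
                exact mul_le_of_le_one_left (by linarith) hν1
              rw [hndef]; push_cast; linarith
          _ = n ^ r := by rw [Finset.prod_const, Finset.card_range]
      have hnle : n ≤ ((k + r : ℕ) : ℝ) * ((j:ℝ) + 1) := by
        rw [hndef]; push_cast
        have hr0 : (0:ℝ) ≤ (r:ℝ) := Nat.cast_nonneg r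
        have hj0 : (0:ℝ) ≤ (j:ℝ) := Nat.cast_nonneg j
        nlinarith
      calc C j * ∏ i ∈ Finset.range r, (p j + i)
          ≤ n ^ (k - 1) * n ^ r := mul_le_mul hC hprodle
              (Finset.prod_nonneg fun i _ => add_nonneg (hp j).le (Nat.cast_nonneg i))
              (by positivity)
        _ = n ^ (k - 1 + r) := (pow_add n _ _).symm
        _ ≤ n ^ (k + r) := pow_le_pow_right₀ hn1 (by omega)
        _ ≤ (((k + r : ℕ) : ℝ) * ((j:ℝ) + 1)) ^ (k + r) :=
            pow_le_pow_left₀ (by linarith) hnle _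
        _ = ((k + r : ℕ) : ℝ) ^ (k + r) * ((j:ℝ) + 1) ^ (k + r) := mul_pow _ _ _
    have hone : (1 / (Nat.factorial r : ℝ)) ≤ 1 := by
      rw [div_le_one hfac]
      exact_mod_cast Nat.one_le_iff_ne_zero.mpr (Nat.factorial_ne_zero r)
    calc (1 / (Nat.factorial r : ℝ)) *
          (C j * x ^ (k + j) * Real.Gamma (p j + (r:ℝ)) / Real.Gamma (p j))
        = (1 / (Nat.factorial r : ℝ)) *
          ((C j * (Real.Gamma (p j + (r:ℝ)) / Real.Gamma (p j))) * (x ^ k * x ^ j)) := by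
          rw [pow_add]; ring
      _ ≤ 1 * ((((k + r : ℕ) : ℝ) ^ (k + r) * ((j:ℝ) + 1) ^ (k + r)) * (x ^ k * x ^ j)) := by
          refine mul_le_mul hone ?_ ?_ zero_le_one
          · exact mul_le_mul_of_nonneg_right hCP (by positivity)
          · exact mul_nonneg (mul_nonneg hCj (div_nonneg (hΓq j).le (hΓp j).le))
              (by positivity)
      _ = D * (((j:ℝ) + 1) ^ (k + r) * x ^ j) := by rw [hDdef]; ring
  have hsumnorm : Summable (fun j : ℕ => ∫ s in Ioi (0:ℝ), ‖G j s‖) := by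
    refine Summable.of_nonneg_of_le
      (fun j => integral_nonneg fun s => norm_nonneg _) (fun j => ?_) (hmaj.mul_left D)
    rw [hnormval j]
    exact hbound j
  have hswap := MeasureTheory.integral_tsum_of_summable_integral_norm
    (μ := volume.restrict (Ioi (0:ℝ))) (F := G) hGint hsumnorm
  have hptwise : ∀ s : ℝ,
      Real.exp (-lα * s) * (lα * s) ^ r / (Nat.factorial r) *
        (lβ ^ k * ∑' j : ℕ, (-1 : ℝ) ^ j * ((k + j - 1).choose j : ℝ) * lβ ^ j *
          s ^ (ν * ((k : ℝ) + j) - 1) / Real.Gamma (ν * ((k : ℝ) + j)))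
      = ∑' j : ℕ, G j s := by
    intro s
    simp only [hGdef, hCdef, hpdef]
    rw [tsum_mul_left, tsum_mul_left]
  calc ∫ s in Set.Ioi (0 : ℝ), Real.exp (-lα * s) * (lα * s) ^ r / (Nat.factorial r) *
      (lβ ^ k * ∑' j : ℕ, (-1 : ℝ) ^ j * ((k + j - 1).choose j : ℝ) * lβ ^ j *
        s ^ (ν * ((k : ℝ) + j) - 1) / Real.Gamma (ν * ((k : ℝ) + j)))
      = ∫ s in Set.Ioi (0 : ℝ), ∑' j : ℕ, G j s := by
        exact MeasureTheory.setIntegral_congr_fun measurableSet_Ioi fun s _ => hptwise s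
    _ = ∑' j : ℕ, ∫ s in Set.Ioi (0 : ℝ), G j s := hswap.symm
    _ = (1 / (Nat.factorial r : ℝ)) *
      ∑' j : ℕ, (-1 : ℝ) ^ j * ((k + j - 1).choose j : ℝ) * x ^ (k + j) *
        Real.Gamma (ν * ((k : ℝ) + j) + r) / Real.Gamma (ν * ((k : ℝ) + j)) := by
        rw [← tsum_mul_left]
        refine tsum_congr fun j => ?_
        have := hintval j
        simp only [hCdef, hpdef] at this
        exact this
end

section
/- Let ν ∈ (0,1], λ_α, λ_β > 0, k ≥ 1 an integer, and u ∈ [0,1) with λ_α^ν (1−u)^ν > λ_β. Then the probability generating function of the composition Ñ^ν(k) = N_α(τ_k^ν) satisfies ∫_0^∞ e^{−λ_α(1−u) s} · λ_β^k Σ_{j=0}^∞ (−1)^j C(k+j−1, j) λ_β^j s^{ν(k+j)−1}/Γ(ν(k+j)) ds = (1 + (1−u)^ν · λ_α^ν/λ_β)^{−k}; in particular Ñ^ν(k) has a Linnik-type distribution. -/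
open Real MeasureTheory Set

/-- the probability generating function of `Ñ^ν(k) = N_α(τ_k^ν)`:
`∫_0^∞ e^{−λ_α(1−u)s} f_k^ν(s) ds = (1 + (1−u)^ν λ_α^ν/λ_β)^{−k}`,
a Linnik-type distribution. -/
theorem pgf_poisson_at_fractional_hitting (ν lα lβ u : ℝ) (hν : ν ∈ Set.Ioc (0 : ℝ) 1)
    (hα : 0 < lα) (hβ : 0 < lβ) (k : ℕ) (hk : 1 ≤ k) (hu : u ∈ Set.Ico (0 : ℝ) 1)
    (hcond : lβ < lα ^ ν * (1 - u) ^ ν) :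
    ∫ s in Set.Ioi (0 : ℝ), Real.exp (-lα * (1 - u) * s) *
      (lβ ^ k * ∑' j : ℕ, (-1 : ℝ) ^ j * ((k + j - 1).choose j : ℝ) * lβ ^ j *
        s ^ (ν * ((k : ℝ) + j) - 1) / Real.Gamma (ν * ((k : ℝ) + j))) =
    (1 + (1 - u) ^ ν * lα ^ ν / lβ) ^ (-(k : ℤ)) := by
  obtain ⟨hν0, hν1⟩ := hν
  obtain ⟨hu0, hu1⟩ := hu
  have h1u : (0:ℝ) < 1 - u := by linarith
  set c : ℝ := lα * (1 - u) with hcdef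
  have hc : 0 < c := mul_pos hα h1u
  have hcν : lβ < c ^ ν := by
    rw [hcdef, Real.mul_rpow hα.le h1u.le]; exact hcond
  have hcνpos : (0:ℝ) < c ^ ν := Real.rpow_pos_of_pos hc ν
  set a : ℕ → ℝ := fun j => ν * ((k : ℝ) + j) with hadef
  have ha : ∀ j, 0 < a j := by
    intro j
    have h1 : (1:ℝ) ≤ (k:ℝ) := by exact_mod_cast hk
    have h2 : (0:ℝ) ≤ (j:ℝ) := Nat.cast_nonneg j
    have : (0:ℝ) < (k:ℝ) + j := by linarith
    exact mul_pos hν0 this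
  have hΓ : ∀ j, 0 < Real.Gamma (a j) := fun j => Real.Gamma_pos_of_pos (ha j)
  -- choose identity
  have hchoose : ∀ j : ℕ, (k + j - 1).choose j = (j + (k - 1)).choose (k - 1) := by
    intro j
    have h1 : k + j - 1 = j + (k - 1) := by omega
    have h2 := Nat.choose_symm (Nat.le_add_right j (k - 1))
    rw [Nat.add_sub_cancel_left] at h2
    rw [h1, ← h2]
  -- the variables x and y
  set y : ℝ := (1 / c) ^ ν with hydef
  have hy : 0 < y := Real.rpow_pos_of_pos (by positivity) ν
  have hyc : y = 1 / c ^ ν := by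
    rw [hydef, Real.div_rpow zero_le_one hc.le, Real.one_rpow]
  set x : ℝ := lβ * y with hxdef
  have hx0 : 0 < x := mul_pos hβ hy
  have hx1 : x < 1 := by
    rw [hxdef, hyc, mul_one_div, div_lt_one hcνpos]; exact hcν
  have hxn : ‖-x‖ < 1 := by rw [norm_neg, Real.norm_eq_abs, abs_of_pos hx0]; exact hx1
  have hxn' : ‖x‖ < 1 := by rw [Real.norm_eq_abs, abs_of_pos hx0]; exact hx1
  -- pow identity for (1/c)^(a j)
  have hpow : ∀ j : ℕ, (1 / c) ^ (a j) = y ^ (k + j) := by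
    intro j
    simp only [hadef, hydef]
    rw [show ν * ((k:ℝ) + j) = ν * ((k + j : ℕ) : ℝ) by push_cast; ring,
      Real.rpow_mul (by positivity), Real.rpow_natCast]
  -- the summand functions
  set F : ℕ → ℝ → ℝ := fun j s =>
    (lβ ^ k * ((-1:ℝ) ^ j * ((k + j - 1).choose j : ℝ) * lβ ^ j) / Real.Gamma (a j)) *
      (s ^ (a j - 1) * Real.exp (-(c * s))) with hFdef
  -- integrability of the basic gamma integrand
  have hint : ∀ j, IntegrableOn (fun s : ℝ => s ^ (a j - 1) * Real.exp (-(c * s))) (Ioi 0) := by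
    intro j
    have h := integrableOn_rpow_mul_exp_neg_mul_rpow (p := 1) (s := a j - 1) (b := c)
      (by linarith [ha j]) zero_lt_one hc
    exact h.congr_fun (fun s hs => by beta_reduce; rw [Real.rpow_one, neg_mul]) measurableSet_Ioi
  have hFint : ∀ j, IntegrableOn (F j) (Ioi 0) := fun j => (hint j).const_mul _
  -- value of the basic integral
  have key : ∀ j, ∫ s in Ioi (0:ℝ), s ^ (a j - 1) * Real.exp (-(c * s))
      = (1 / c) ^ (a j) * Real.Gamma (a j) :=
    fun j => Real.integral_rpow_mul_exp_neg_mul_Ioi (ha j) hc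
  -- integral of F j
  have hFint_val : ∀ j, ∫ s in Ioi (0:ℝ), F j s
      = x ^ k * (((j + (k - 1)).choose (k - 1) : ℝ) * (-x) ^ j) := by
    intro j
    rw [hFdef]
    simp only
    rw [MeasureTheory.integral_const_mul, key j, hpow j, hchoose j]
    have hΓne := (hΓ j).ne'
    field_simp
    rw [pow_add]
    ring
  -- integral of ‖F j‖
  have hFnorm_val : ∀ j, ∫ s in Ioi (0:ℝ), ‖F j s‖
      = x ^ k * (((j + (k - 1)).choose (k - 1) : ℝ) * x ^ j) := by
    intro j
    have heq : ∀ s ∈ Ioi (0:ℝ), ‖F j s‖ =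
        (lβ ^ k * (((k + j - 1).choose j : ℝ) * lβ ^ j) / Real.Gamma (a j)) *
          (s ^ (a j - 1) * Real.exp (-(c * s))) := by
      intro s hs
      have hs0 : (0:ℝ) < s := hs
      rw [hFdef]
      simp only
      rw [norm_mul, Real.norm_eq_abs, Real.norm_eq_abs,
        abs_of_nonneg (by positivity : (0:ℝ) ≤ s ^ (a j - 1) * Real.exp (-(c * s))),
        abs_div, abs_of_pos (hΓ j), abs_mul, abs_mul, abs_mul, abs_pow, abs_pow, abs_pow,
        abs_neg, abs_one, one_pow, abs_of_pos hβ, abs_of_nonneg (Nat.cast_nonneg _)]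
      ring
    rw [setIntegral_congr_fun measurableSet_Ioi heq, MeasureTheory.integral_const_mul, key j,
      hpow j, hchoose j]
    have hΓne := (hΓ j).ne'
    field_simp
    rw [pow_add]
    ring
  -- summability of the norms
  have hsum : Summable (fun j => ∫ s in Ioi (0:ℝ), ‖F j s‖) := by
    rw [funext hFnorm_val]
    exact ((summable_choose_mul_geometric_of_norm_lt_one (k - 1) hxn').mul_left _)
  -- interchange
  have hswap := MeasureTheory.integral_tsum_of_summable_integral_norm hFint hsum
  -- the integrand equals the tsum of F
  have hintegrand : ∀ s ∈ Ioi (0:ℝ),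
      Real.exp (-lα * (1 - u) * s) *
        (lβ ^ k * ∑' j : ℕ, (-1 : ℝ) ^ j * ((k + j - 1).choose j : ℝ) * lβ ^ j *
          s ^ (ν * ((k : ℝ) + j) - 1) / Real.Gamma (ν * ((k : ℝ) + j)))
      = ∑' j : ℕ, F j s := by
    intro s _
    rw [← tsum_mul_left, ← tsum_mul_left]
    congr 1
    funext j
    rw [hFdef]
    simp only [hadef]
    rw [show -lα * (1 - u) * s = -(c * s) by rw [hcdef]; ring]
    ring
  rw [setIntegral_congr_fun measurableSet_Ioi hintegrand, ← hswap, funext hFint_val,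
    tsum_mul_left, (hasSum_choose_mul_geometric_of_norm_lt_one (k - 1) hxn).tsum_eq]
  -- now pure algebra
  have hk1 : k - 1 + 1 = k := Nat.succ_pred_eq_of_pos hk
  rw [hk1, sub_neg_eq_add]
  have hrhs : (1:ℝ) + (1 - u) ^ ν * lα ^ ν / lβ = 1 + c ^ ν / lβ := by
    rw [hcdef, Real.mul_rpow hα.le h1u.le]; ring_nf
  rw [hrhs, zpow_neg, zpow_natCast]
  have hbase : x ^ k * (1 / (1 + x) ^ k) = (x / (1 + x)) ^ k := by
    rw [div_pow]; ring
  rw [hbase, ← inv_pow]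
  congr 1
  rw [hxdef, hyc, mul_one_div]
  have h1x : (0:ℝ) < 1 + lβ / c ^ ν := by positivity
  have h2 : (0:ℝ) < 1 + c ^ ν / lβ := by positivity
  field_simp
  ring
end

section
/- Let ν ∈ (0,1], λ_α, λ_β > 0 with λ_β < λ_α^ν, and let k ≥ 1, r ≥ 1 be integers. Then the distribution of the Yule–Furry process Y_α subordinated to the first-passage time τ_k^ν satisfies ∫_0^∞ e^{−λ_α s} (1 − e^{−λ_α s})^{r−1} · λ_β^k Σ_{j=0}^∞ (−1)^j C(k+j−1, j) λ_β^j s^{ν(k+j)−1}/Γ(ν(k+j)) ds = Σ_{h=1}^{r} C(r−1, h−1) (−1)^{h−1} (1 + h^ν · λ_α^ν/λ_β)^{−k}. -/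
open Real

private lemma choose_shift (k : ℕ) (hk : 1 ≤ k) (j : ℕ) :
    (k + j - 1).choose j = (j + (k - 1)).choose (k - 1) := by
  rw [show k + j - 1 = j + (k - 1) by omega, Nat.choose_symm_add]

private lemma hasSum_aux (k : ℕ) (hk : 1 ≤ k) {t : ℝ} (ht : |t| < 1) :
    HasSum (fun j : ℕ => ((k + j - 1).choose j : ℝ) * t ^ j) (1 / (1 - t) ^ k) := by
  have h := hasSum_choose_mul_geometric_of_norm_lt_one (𝕜 := ℝ) (k - 1) (r := t)
    (by simpa [Real.norm_eq_abs] using ht)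
  rw [Nat.sub_add_cancel hk] at h
  simpa only [choose_shift k hk] using h

private lemma integrable_aux {q b : ℝ} (hq : 0 < q) (hb : 0 < b) :
    MeasureTheory.IntegrableOn (fun s : ℝ => s ^ (q - 1) * Real.exp (-(b * s))) (Set.Ioi 0) := by
  have h := integrableOn_rpow_mul_exp_neg_mul_rpow (s := q - 1) (p := 1) (by linarith) zero_lt_one hb
  simpa [Real.rpow_one, neg_mul] using h

open MeasureTheory in
/-- the distribution of the Yule–Furry process subordinated to the
first-passage time of an independent fractional Poisson process:
`∫_0^∞ e^{−λ_α s}(1−e^{−λ_α s})^{r−1} f_k^ν(s) ds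
 = Σ_{h=1}^r C(r−1,h−1)(−1)^{h−1}(1 + h^ν λ_α^ν/λ_β)^{−k}`. -/
theorem yule_at_fractional_hitting_distribution (ν lα lβ : ℝ)
    (hν : ν ∈ Set.Ioc (0 : ℝ) 1) (hα : 0 < lα) (hβ : 0 < lβ) (hcond : lβ < lα ^ ν)
    (k r : ℕ) (hk : 1 ≤ k) (hr : 1 ≤ r) :
    ∫ s in Set.Ioi (0 : ℝ), Real.exp (-lα * s) * (1 - Real.exp (-lα * s)) ^ (r - 1) *
      (lβ ^ k * ∑' j : ℕ, (-1 : ℝ) ^ j * ((k + j - 1).choose j : ℝ) * lβ ^ j *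
        s ^ (ν * ((k : ℝ) + j) - 1) / Real.Gamma (ν * ((k : ℝ) + j))) =
    ∑ h ∈ Finset.Icc 1 r, ((r - 1).choose (h - 1) : ℝ) * (-1 : ℝ) ^ (h - 1) *
      (1 + (h : ℝ) ^ ν * lα ^ ν / lβ) ^ (-(k : ℤ)) := by
  classical
  obtain ⟨hν0, hν1⟩ := hν
  have hk1 : (1 : ℝ) ≤ (k : ℝ) := by exact_mod_cast hk
  have hp : ∀ j : ℕ, 0 < ν * ((k : ℝ) + j) := by
    intro j
    have hj : (0 : ℝ) ≤ j := Nat.cast_nonneg j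
    exact mul_pos hν0 (by linarith)
  have hΓpos : ∀ j : ℕ, 0 < Real.Gamma (ν * ((k : ℝ) + j)) :=
    fun j => Real.Gamma_pos_of_pos (hp j)
  have hai : ∀ i : ℕ, (0:ℝ) < ((i:ℝ) + 1) * lα := fun i =>
    mul_pos (by positivity) hα
  -- coefficients
  set c : ℕ → ℝ := fun j =>
    lβ ^ k * (-1 : ℝ) ^ j * ((k + j - 1).choose j : ℝ) * lβ ^ j /
      Real.Gamma (ν * ((k : ℝ) + j)) with hc
  -- the j-th term of the series, as a function of s
  set T : ℕ → ℝ → ℝ := fun j s =>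
    c j * ((1 - Real.exp (-(lα * s))) ^ (r - 1) *
      (s ^ (ν * ((k : ℝ) + j) - 1) * Real.exp (-(lα * s)))) with hT
  have habsc : ∀ j : ℕ, |c j| =
      lβ ^ k * ((k + j - 1).choose j : ℝ) * lβ ^ j / Real.Gamma (ν * ((k : ℝ) + j)) := by
    intro j
    simp only [hc]
    rw [abs_div, abs_of_nonneg (hΓpos j).le, abs_mul, abs_mul, abs_mul,
      abs_pow, abs_pow, abs_neg, abs_one, one_pow, mul_one,
      abs_of_nonneg hβ.le, Nat.abs_cast, abs_of_nonneg (pow_nonneg hβ.le j)]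
  -- pointwise norm bound
  have hbound : ∀ j : ℕ, ∀ s ∈ Set.Ioi (0 : ℝ),
      ‖T j s‖ ≤ |c j| * (s ^ (ν * ((k : ℝ) + j) - 1) * Real.exp (-(lα * s))) := by
    intro j s hs
    have hs0 : (0 : ℝ) < s := hs
    have hE0 : (0 : ℝ) < Real.exp (-(lα * s)) := Real.exp_pos _
    have hE1 : Real.exp (-(lα * s)) ≤ 1 := by
      rw [Real.exp_le_one_iff]; nlinarith
    have hB0 : (0 : ℝ) ≤ (1 - Real.exp (-(lα * s))) ^ (r - 1) := pow_nonneg (by linarith) _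
    have hB1 : (1 - Real.exp (-(lα * s))) ^ (r - 1) ≤ 1 := pow_le_one₀ (by linarith) (by linarith)
    have hsp : (0 : ℝ) ≤ s ^ (ν * ((k : ℝ) + j) - 1) := Real.rpow_nonneg hs0.le _
    simp only [hT]
    rw [Real.norm_eq_abs, abs_mul,
      abs_of_nonneg (mul_nonneg hB0 (mul_nonneg hsp hE0.le))]
    apply mul_le_mul_of_nonneg_left _ (abs_nonneg _)
    calc (1 - Real.exp (-(lα * s))) ^ (r - 1) * (s ^ (ν * ((k : ℝ) + j) - 1) * Real.exp (-(lα * s)))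
        ≤ 1 * (s ^ (ν * ((k : ℝ) + j) - 1) * Real.exp (-(lα * s))) := by
          apply mul_le_mul_of_nonneg_right hB1 (mul_nonneg hsp hE0.le)
      _ = _ := one_mul _
  -- measurability
  have hmeas : ∀ j : ℕ, AEStronglyMeasurable (T j) (volume.restrict (Set.Ioi 0)) := by
    intro j
    apply Measurable.aestronglyMeasurable
    simp only [hT]
    fun_prop
  -- z₀ strictly below 1
  have hz₀1 : lβ * ((1 : ℝ)/lα) ^ ν < 1 := by
    rw [one_div, Real.inv_rpow hα.le]
    rw [mul_inv_lt_iff₀ (Real.rpow_pos_of_pos hα ν), one_mul]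
    exact hcond
  have hz₀0 : 0 < lβ * ((1 : ℝ)/lα) ^ ν :=
    mul_pos hβ (Real.rpow_pos_of_pos (by positivity) ν)
  -- generic rpow → pow identity
  have hrpow : ∀ (a : ℝ), 0 < a → ∀ j : ℕ,
      ((1:ℝ)/a) ^ (ν * ((k : ℝ) + j)) = (((1:ℝ)/a) ^ ν) ^ k * (((1:ℝ)/a) ^ ν) ^ j := by
    intro a ha j
    rw [Real.rpow_mul (by positivity : (0:ℝ) ≤ 1/a),
      show ((k : ℝ) + (j : ℝ)) = ((k + j : ℕ) : ℝ) by push_cast; ring,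
      Real.rpow_natCast, pow_add]
  -- the dominating sequence
  set u : ℕ → ℝ := fun j =>
    lβ ^ k * ((k + j - 1).choose j : ℝ) * lβ ^ j * ((1:ℝ)/lα) ^ (ν * ((k : ℝ) + j)) with hu
  have husum : Summable u := by
    have h := (hasSum_aux k hk (t := lβ * ((1:ℝ)/lα) ^ ν)
      (by rw [abs_of_nonneg hz₀0.le]; exact hz₀1)).summable
    have h2 := h.mul_left (lβ ^ k * (((1:ℝ)/lα) ^ ν) ^ k)
    apply h2.congr
    intro j
    simp only [hu]
    rw [hrpow lα hα j]
    ring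
  have hu0 : ∀ j, 0 ≤ u j := by
    intro j
    simp only [hu]
    positivity
  -- finiteness of the tsum of lintegrals
  have hfin : ∑' j : ℕ, ∫⁻ s, ‖T j s‖₊ ∂(volume.restrict (Set.Ioi 0)) ≠ ⊤ := by
    have hle : ∀ j : ℕ, ∫⁻ s, ‖T j s‖₊ ∂(volume.restrict (Set.Ioi 0)) ≤ ENNReal.ofReal (u j) := by
      intro j
      have hM : Integrable (fun s : ℝ =>
          |c j| * (s ^ (ν * ((k : ℝ) + j) - 1) * Real.exp (-(lα * s))))
          (volume.restrict (Set.Ioi 0)) := (integrable_aux (hp j) hα).const_mul _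
      calc ∫⁻ s, ‖T j s‖₊ ∂(volume.restrict (Set.Ioi 0))
          ≤ ∫⁻ s, ENNReal.ofReal
              (|c j| * (s ^ (ν * ((k : ℝ) + j) - 1) * Real.exp (-(lα * s))))
              ∂(volume.restrict (Set.Ioi 0)) := by
            apply lintegral_mono_ae
            filter_upwards [ae_restrict_mem measurableSet_Ioi] with s hs
            rw [← ENNReal.ofReal_coe_nnreal, coe_nnnorm]
            exact ENNReal.ofReal_le_ofReal (hbound j s hs)
        _ = ENNReal.ofReal (∫ s in Set.Ioi (0:ℝ),
              |c j| * (s ^ (ν * ((k : ℝ) + j) - 1) * Real.exp (-(lα * s)))) := by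
            refine (ofReal_integral_eq_lintegral_ofReal hM ?_).symm
            filter_upwards [ae_restrict_mem measurableSet_Ioi] with s hs
            have hs0 : (0:ℝ) < s := hs
            positivity
        _ = ENNReal.ofReal (u j) := by
            rw [integral_const_mul, Real.integral_rpow_mul_exp_neg_mul_Ioi (hp j) hα, habsc j]
            simp only [hu]
            congr 1
            have hΓ := (hΓpos j).ne'
            field_simp
    exact ne_top_of_le_ne_top
      (by rw [← ENNReal.ofReal_tsum_of_nonneg hu0 husum]; exact ENNReal.ofReal_ne_top)
      (ENNReal.tsum_le_tsum hle)
  -- Step 1: rewrite the integrand as a tsum of T and swap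
  have hA : ∀ s : ℝ, Real.exp (-(lα * s)) * (1 - Real.exp (-(lα * s))) ^ (r - 1) *
      (lβ ^ k * ∑' j : ℕ, (-1 : ℝ) ^ j * ((k + j - 1).choose j : ℝ) * lβ ^ j *
        s ^ (ν * ((k : ℝ) + j) - 1) / Real.Gamma (ν * ((k : ℝ) + j))) = ∑' j : ℕ, T j s := by
    intro s
    rw [← tsum_mul_left, ← tsum_mul_left]
    refine tsum_congr fun j => ?_
    simp only [hT, hc]
    ring
  simp only [neg_mul]
  simp only [hA]
  rw [MeasureTheory.integral_tsum hmeas hfin]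
  -- Step 2: evaluate each ∫ T j as a finite sum over i ∈ range r
  have hTint : ∀ j : ℕ, ∫ s in Set.Ioi (0:ℝ), T j s =
      ∑ i ∈ Finset.range r, (c j * ((-1 : ℝ) ^ i * ((r - 1).choose i : ℝ))) *
        (((1:ℝ)/(((i:ℝ) + 1) * lα)) ^ (ν * ((k : ℝ) + j)) * Real.Gamma (ν * ((k : ℝ) + j))) := by
    intro j
    have hexpand : ∀ s ∈ Set.Ioi (0:ℝ), T j s =
        ∑ i ∈ Finset.range r, (c j * ((-1 : ℝ) ^ i * ((r - 1).choose i : ℝ))) *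
          (s ^ (ν * ((k : ℝ) + j) - 1) * Real.exp (-((((i:ℝ) + 1) * lα) * s))) := by
      intro s hs
      simp only [hT]
      have hbinom : (1 - Real.exp (-(lα * s))) ^ (r - 1) =
          ∑ i ∈ Finset.range r, (-1 : ℝ) ^ i * ((r - 1).choose i : ℝ) *
            Real.exp (-(lα * s)) ^ i := by
        rw [show (1 : ℝ) - Real.exp (-(lα * s)) = -Real.exp (-(lα * s)) + 1 by ring,
          add_pow, show r - 1 + 1 = r by omega]
        refine Finset.sum_congr rfl fun i _ => ?_
        rw [neg_pow, one_pow, mul_one]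
        ring
      rw [hbinom, Finset.sum_mul, Finset.mul_sum]
      refine Finset.sum_congr rfl fun i _ => ?_
      have hexp : Real.exp (-(lα * s)) ^ i * Real.exp (-(lα * s)) =
          Real.exp (-((((i:ℝ) + 1) * lα) * s)) := by
        rw [← Real.exp_nat_mul, ← Real.exp_add]
        congr 1
        ring
      rw [← hexp]
      ring
    rw [MeasureTheory.setIntegral_congr_fun measurableSet_Ioi hexpand]
    rw [MeasureTheory.integral_finset_sum _ (fun i _ =>
      ((integrable_aux (hp j) (hai i)).const_mul _))]
    refine Finset.sum_congr rfl fun i _ => ?_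
    rw [integral_const_mul,
      Real.integral_rpow_mul_exp_neg_mul_Ioi (hp j) (hai i)]
  simp only [hTint]
  -- Step 3: swap the tsum with the finite sum
  have hsummable : ∀ i ∈ Finset.range r, Summable (fun j : ℕ =>
      (c j * ((-1 : ℝ) ^ i * ((r - 1).choose i : ℝ))) *
        (((1:ℝ)/(((i:ℝ) + 1) * lα)) ^ (ν * ((k : ℝ) + j)) * Real.Gamma (ν * ((k : ℝ) + j)))) := by
    intro i _
    have ha : (0:ℝ) < ((i:ℝ) + 1) * lα := hai i
    have hw0 : (0:ℝ) < ((1:ℝ)/(((i:ℝ) + 1) * lα)) ^ ν := Real.rpow_pos_of_pos (by positivity) ν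
    have hz1 : lβ * ((1:ℝ)/(((i:ℝ) + 1) * lα)) ^ ν < 1 := by
      have hle : ((1:ℝ)/(((i:ℝ) + 1) * lα)) ≤ (1:ℝ)/lα := by
        apply one_div_le_one_div_of_le hα
        nlinarith [Nat.cast_nonneg (α := ℝ) i]
      have hww : ((1:ℝ)/(((i:ℝ) + 1) * lα)) ^ ν ≤ ((1:ℝ)/lα) ^ ν :=
        Real.rpow_le_rpow (by positivity) hle hν0.le
      calc lβ * ((1:ℝ)/(((i:ℝ) + 1) * lα)) ^ ν ≤ lβ * ((1:ℝ)/lα) ^ ν := by nlinarith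
        _ < 1 := hz₀1
    have h := (hasSum_aux k hk (t := -(lβ * ((1:ℝ)/(((i:ℝ) + 1) * lα)) ^ ν))
      (by rw [abs_neg, abs_of_nonneg (by positivity : (0:ℝ) ≤ lβ * ((1:ℝ)/(((i:ℝ) + 1) * lα)) ^ ν)]
          exact hz1)).summable
    have h2 := h.mul_left (((-1 : ℝ) ^ i * ((r - 1).choose i : ℝ)) *
      (lβ ^ k * (((1:ℝ)/(((i:ℝ) + 1) * lα)) ^ ν) ^ k))
    apply h2.congr
    intro j
    simp only [hc]
    rw [hrpow _ ha j]
    have hΓ := (hΓpos j).ne'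
    field_simp
    ring
  rw [Summable.tsum_finsetSum hsummable]
  -- Step 4: rewrite the RHS as a sum over range r
  rw [← Finset.Ico_add_one_right_eq_Icc, Finset.sum_Ico_eq_sum_range]
  simp only [Nat.add_sub_cancel, Nat.succ_sub_one]
  -- Step 5: evaluate each inner tsum
  refine Finset.sum_congr rfl fun i _ => ?_
  have ha : (0:ℝ) < ((i:ℝ) + 1) * lα := by positivity
  set w : ℝ := ((1:ℝ)/(((i:ℝ) + 1) * lα)) ^ ν with hw
  have hw0 : 0 < w := Real.rpow_pos_of_pos (by positivity) ν
  have hz1 : lβ * w < 1 := by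
    have hle : ((1:ℝ)/(((i:ℝ) + 1) * lα)) ≤ (1:ℝ)/lα := by
      apply one_div_le_one_div_of_le hα
      nlinarith [Nat.cast_nonneg (α := ℝ) i]
    have hww : w ≤ ((1:ℝ)/lα) ^ ν := Real.rpow_le_rpow (by positivity) hle hν0.le
    calc lβ * w ≤ lβ * ((1:ℝ)/lα) ^ ν := by nlinarith
      _ < 1 := hz₀1
  have hsum := (hasSum_aux k hk (t := -(lβ * w))
    (by rw [abs_neg, abs_of_nonneg (by positivity : (0:ℝ) ≤ lβ * w)]; exact hz1)).mul_left
    (((-1 : ℝ) ^ i * ((r - 1).choose i : ℝ)) * (lβ ^ k * w ^ k))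
  have htsum : ∑' j : ℕ, (c j * ((-1 : ℝ) ^ i * ((r - 1).choose i : ℝ))) *
      (((1:ℝ)/(((i:ℝ) + 1) * lα)) ^ (ν * ((k : ℝ) + j)) * Real.Gamma (ν * ((k : ℝ) + j))) =
      (((-1 : ℝ) ^ i * ((r - 1).choose i : ℝ)) * (lβ ^ k * w ^ k)) *
        (1 / (1 - -(lβ * w)) ^ k) := by
    rw [← hsum.tsum_eq]
    refine tsum_congr fun j => ?_
    simp only [hc]
    rw [hrpow _ ha j, ← hw]
    have hΓ := (hΓpos j).ne'
    field_simp
    ring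
  rw [htsum, sub_neg_eq_add]
  -- Step 6: final algebra
  set v : ℝ := (((i:ℝ) + 1) * lα) ^ ν with hv
  have hv0 : 0 < v := Real.rpow_pos_of_pos ha ν
  have hwv : w = v⁻¹ := by
    rw [hw, hv, one_div, Real.inv_rpow ha.le]
  have hmul : (1 + v / lβ) * (lβ * w) = 1 + lβ * w := by
    rw [hwv]
    field_simp
    ring
  have hmain : lβ ^ k * w ^ k * (1 / (1 + lβ * w) ^ k) = ((1 + v / lβ) ^ k)⁻¹ := by
    have hpos1 : (0:ℝ) < 1 + lβ * w := by positivity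
    have hpos2 : (0:ℝ) < 1 + v / lβ := by positivity
    rw [mul_one_div, inv_eq_one_div, div_eq_div_iff (by positivity) (by positivity), one_mul]
    calc lβ ^ k * w ^ k * (1 + v / lβ) ^ k = ((1 + v / lβ) * (lβ * w)) ^ k := by
          rw [mul_pow, mul_pow]; ring
      _ = (1 + lβ * w) ^ k := by rw [hmul]
  rw [show (1 + i) - 1 = i from by omega]
  rw [show ((1 + i : ℕ) : ℝ) = (i:ℝ) + 1 from by push_cast; ring]
  have hvsplit : ((i:ℝ) + 1) ^ ν * lα ^ ν = v := by
    rw [hv, Real.mul_rpow (by positivity) hα.le]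
  rw [hvsplit, zpow_neg, zpow_natCast]
  rw [show (((-1:ℝ) ^ i * ((r - 1).choose i : ℝ)) * (lβ ^ k * w ^ k)) * (1/(1 + lβ * w) ^ k)
      = ((-1:ℝ) ^ i * ((r - 1).choose i : ℝ)) * (lβ ^ k * w ^ k * (1/(1 + lβ * w) ^ k)) from by
        ring, hmain]
  ring
end

section
/- Let λ_α, λ_β > 0 and let r ≥ 1 be an integer. Then Σ_{h=1}^{r} C(r−1, h−1) (−1)^{h−1} · λ_β/(λ_β + h λ_α) = (λ_β/λ_α) · (r−1)! · Γ(λ_β/λ_α + 1) / Γ(λ_β/λ_α + 1 + r) = (λ_β/λ_α) · B(r, λ_β/λ_α + 1), where B denotes the Beta function; that is, Pr{Y_α(τ_1^1) = r} has the Beta form above. -/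
open Real Finset

lemma aux_prod_pos (n : ℕ) (x : ℝ) (hx : 0 < x) :
    0 < ∏ k ∈ Finset.range n, (x + k) :=
  Finset.prod_pos fun k _ => by positivity

lemma aux_sum (n : ℕ) : ∀ x : ℝ, 0 < x →
    ∑ k ∈ Finset.range (n+1), (n.choose k : ℝ) * (-1)^k / (x + k)
      = n.factorial / ∏ k ∈ Finset.range (n+1), (x + k) := by
  induction n with
  | zero => intro x hx; simp
  | succ n ih =>
    intro x hx
    have hP := aux_prod_pos (n+1) x hx
    have hQ := aux_prod_pos (n+1) (x+1) (by linarith)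
    have hrel : x * ∏ k ∈ Finset.range (n+1), ((x+1) + k)
        = (∏ k ∈ Finset.range (n+1), (x + k)) * (x + (n+1)) := by
      have h1 : ∏ k ∈ Finset.range (n+2), (x + k)
          = x * ∏ k ∈ Finset.range (n+1), ((x+1) + k) := by
        rw [Finset.prod_range_succ']
        push_cast
        ring_nf
      have h2 : ∏ k ∈ Finset.range (n+2), (x + k)
          = (∏ k ∈ Finset.range (n+1), (x + k)) * (x + (n+1)) := by
        rw [Finset.prod_range_succ]
        push_cast
        ring_nf
      rw [← h1, h2]
    have hsplit : ∑ k ∈ Finset.range (n+2), ((n+1).choose k : ℝ) * (-1)^k / (x + k)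
        = (∑ k ∈ Finset.range (n+1), (n.choose k : ℝ) * (-1)^k / (x + k))
          - ∑ k ∈ Finset.range (n+1), (n.choose k : ℝ) * (-1)^k / ((x+1) + k) := by
      rw [Finset.sum_range_succ' (fun k => ((n+1).choose k : ℝ) * (-1)^k / (x + k)),
          Finset.sum_range_succ' (fun k => ((n).choose k : ℝ) * (-1)^k / (x + k))]
      simp only [Nat.choose_succ_succ, Nat.choose_zero_right, Nat.succ_eq_add_one]
      push_cast
      have key : ∀ k ∈ Finset.range (n+1),
          ((n.choose k : ℝ) + n.choose (k+1)) * (-1)^(k+1) / (x + (k+1))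
          = (n.choose (k+1) : ℝ) * (-1)^(k+1) / (x + ((k:ℝ)+1))
            - (n.choose k : ℝ) * (-1)^k / ((x+1) + k) := by
        intro k _
        have hxk : x + ((k:ℝ)+1) ≠ 0 := by positivity
        have hxk2 : (x+1) + (k:ℝ) ≠ 0 := by positivity
        rw [div_sub_div _ _ hxk hxk2, div_eq_div_iff (by positivity) (by positivity)]
        ring
      rw [Finset.sum_congr rfl key, Finset.sum_sub_distrib]
      have hlast : ∑ k ∈ Finset.range (n+1), (n.choose (k+1) : ℝ) * (-1)^(k+1) / (x + ((k:ℝ)+1))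
          = ∑ k ∈ Finset.range n, (n.choose (k+1) : ℝ) * (-1)^(k+1) / (x + ((k:ℝ)+1)) := by
        rw [Finset.sum_range_succ]
        simp [Nat.choose_succ_self]
      rw [hlast]
      push_cast
      ring
    rw [hsplit, ih x hx, ih (x+1) (by linarith)]
    rw [div_sub_div _ _ (ne_of_gt hP) (ne_of_gt hQ)]
    have hprod2 : ∏ k ∈ Finset.range (n+2), (x + k)
        = (∏ k ∈ Finset.range (n+1), (x + k)) * (x + (n+1)) := by
      rw [Finset.prod_range_succ]; push_cast; ring_nf
    rw [hprod2, div_eq_div_iff (by positivity) (by positivity)]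
    push_cast [Nat.factorial_succ]
    linear_combination ((n.factorial : ℝ) * (∏ k ∈ Finset.range (n+1), (x + (k:ℝ)))) * hrel

lemma aux_gamma (n : ℕ) (x : ℝ) (hx : 0 < x) :
    Real.Gamma (x + (n+1)) = Real.Gamma x * ∏ k ∈ Finset.range (n+1), (x + k) := by
  induction n with
  | zero =>
    simp [Real.Gamma_add_one (ne_of_gt hx)]
    ring
  | succ n ih =>
    rw [Finset.prod_range_succ, ← mul_assoc, ← ih]
    have h2 : x + (((n:ℝ)+1) + 1) = (x + ((n:ℝ)+1)) + 1 := by ring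
    push_cast
    rw [h2, Real.Gamma_add_one (by positivity)]
    push_cast
    ring

/-- `Pr{Y_α(τ_1^1) = r} = Σ_{h=1}^r C(r−1,h−1)(−1)^{h−1} λ_β/(λ_β+hλ_α)`
equals `(λ_β/λ_α)(r−1)!Γ(λ_β/λ_α+1)/Γ(λ_β/λ_α+1+r) = (λ_β/λ_α) B(r, λ_β/λ_α+1)`,
where `B(x,y) = Γ(x)Γ(y)/Γ(x+y)`. -/
theorem yule_at_exponential_beta_form (lα lβ : ℝ) (hα : 0 < lα) (hβ : 0 < lβ)
    (r : ℕ) (hr : 1 ≤ r) :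
    (∑ h ∈ Finset.Icc 1 r, ((r - 1).choose (h - 1) : ℝ) * (-1 : ℝ) ^ (h - 1) *
        (lβ / (lβ + (h : ℝ) * lα)) =
      lβ / lα * (Nat.factorial (r - 1) : ℝ) * Real.Gamma (lβ / lα + 1) /
        Real.Gamma (lβ / lα + 1 + r)) ∧
    lβ / lα * (Nat.factorial (r - 1) : ℝ) * Real.Gamma (lβ / lα + 1) /
        Real.Gamma (lβ / lα + 1 + r) =
      lβ / lα * (Real.Gamma r * Real.Gamma (lβ / lα + 1) /
        Real.Gamma ((r : ℝ) + (lβ / lα + 1))) := by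
  obtain ⟨n, rfl⟩ : ∃ n, r = n + 1 := ⟨r - 1, (Nat.succ_pred_eq_of_pos hr).symm⟩
  set c : ℝ := lβ / lα with hc
  have hcpos : 0 < c := div_pos hβ hα
  have hx : 0 < c + 1 := by linarith
  have hG : Real.Gamma (c + 1 + ((n + 1 : ℕ) : ℝ))
      = Real.Gamma (c + 1) * ∏ k ∈ Finset.range (n+1), ((c + 1) + k) := by
    have h := aux_gamma n (c + 1) hx
    have he : c + 1 + ((n + 1 : ℕ) : ℝ) = (c + 1) + ((n : ℝ) + 1) := by push_cast; ring
    rw [he]; exact h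
  have hGpos : 0 < Real.Gamma (c + 1) := Real.Gamma_pos_of_pos hx
  have hPpos := aux_prod_pos (n+1) (c+1) hx
  constructor
  · have hre : ∑ h ∈ Finset.Icc 1 (n+1), ((n + 1 - 1).choose (h - 1) : ℝ) * (-1 : ℝ) ^ (h - 1) *
        (lβ / (lβ + (h : ℝ) * lα))
        = ∑ k ∈ Finset.range (n+1), ((n + 1 - 1).choose (k + 1 - 1) : ℝ) * (-1 : ℝ) ^ (k + 1 - 1) *
        (lβ / (lβ + ((k + 1 : ℕ) : ℝ) * lα)) := by
      refine Finset.sum_nbij' (fun h => h - 1) (fun k => k + 1) ?_ ?_ ?_ ?_ ?_ <;>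
        intros a ha <;> simp_all <;> omega
    rw [hre]
    simp only [Nat.add_sub_cancel]
    have hterm : ∀ i ∈ Finset.range (n+1),
        (n.choose i : ℝ) * (-1 : ℝ) ^ i * (lβ / (lβ + ((i + 1 : ℕ) : ℝ) * lα))
        = c * ((n.choose i : ℝ) * (-1)^i / ((c + 1) + i)) := by
      intro i _
      have hd1 : (0:ℝ) < lβ + ((i + 1 : ℕ) : ℝ) * lα := by positivity
      have hd2 : (0:ℝ) < (c + 1) + (i : ℝ) := by positivity
      have hkey : lβ * ((c + 1) + (i:ℝ)) = c * (lβ + ((i + 1 : ℕ) : ℝ) * lα) := by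
        rw [hc]
        field_simp
        ring_nf
        simp
        ring
      have hfrac : lβ / (lβ + ((i + 1 : ℕ) : ℝ) * lα) = c / ((c + 1) + i) :=
        (div_eq_div_iff hd1.ne' hd2.ne').mpr hkey
      rw [hfrac]
      ring
    rw [Finset.sum_congr rfl hterm, ← Finset.mul_sum, aux_sum n (c+1) hx, hG]
    rw [eq_div_iff (by positivity)]
    field_simp
  · have hGr : Real.Gamma ((n + 1 : ℕ) : ℝ) = (n.factorial : ℝ) := by
      push_cast
      rw [Real.Gamma_nat_eq_factorial]
    have hcomm : ((n + 1 : ℕ) : ℝ) + (c + 1) = c + 1 + ((n + 1 : ℕ) : ℝ) := by ring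
    simp only [Nat.add_sub_cancel]
    rw [hcomm, hGr]
    ring
end

section
/- Let ν ∈ (0,1], λ_α, λ_β > 0, k ≥ 1 an integer, and u ∈ [0,1) with λ_α^ν (1−u)^ν > k λ_β. Set x = λ_α^ν (1−u)^ν / λ_β and let E_{ν,ν}(z) = Σ_{n=0}^∞ z^n/Γ(νn+ν). Then the probability generating function of the Poisson process N_α composed with the inverse φ_k^ν of an independent fractional linear pure birth process satisfies ∫_0^∞ e^{−λ_α(1−u) s} · Σ_{l=1}^{k} C(k, l) (−1)^{l−1} λ_β l s^{ν−1} E_{ν,ν}(−λ_β l s^ν) ds = k! · Γ(x + 1) / Γ(x + 1 + k). -/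
open Real

/-- The two-parameter Mittag–Leffler function `E_{ν,ν}(z) = Σ_{n=0}^∞ z^n / Γ(νn + ν)`. -/
noncomputable def mittagLeffler2 (ν z : ℝ) : ℝ :=
  ∑' n : ℕ, z ^ n / Real.Gamma (ν * n + ν)

open MeasureTheory Set Finset

lemma gamma_laplace {a p : ℝ} (ha : 0 < a) (hp : 0 < p) :
    IntegrableOn (fun s : ℝ => s ^ (a - 1) * Real.exp (-(p * s))) (Ioi 0) ∧
    ∫ s in Ioi (0:ℝ), s ^ (a - 1) * Real.exp (-(p * s)) = (1 / p) ^ a * Real.Gamma a := by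
  constructor
  · have := integrableOn_rpow_mul_exp_neg_mul_rpow (p := 1) (s := a - 1) (b := p)
      (by linarith) zero_lt_one hp
    refine this.congr_fun (fun x hx => ?_) measurableSet_Ioi
    simp only [Real.rpow_one]; ring_nf
  · exact integral_rpow_mul_exp_neg_mul_Ioi ha hp

lemma laplace_ML {ν p c : ℝ} (hν : 0 < ν) (hp : 0 < p) (hc : 0 < c) (h : c < p ^ ν) :
    IntegrableOn (fun s : ℝ =>
      Real.exp (-(p * s)) * (s ^ (ν - 1) * mittagLeffler2 ν (-(c * s ^ ν)))) (Ioi 0) ∧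
    ∫ s in Ioi (0:ℝ), Real.exp (-(p * s)) * (s ^ (ν - 1) * mittagLeffler2 ν (-(c * s ^ ν)))
      = 1 / (p ^ ν + c) := by
  set g : ℝ → ℝ := fun s =>
    Real.exp (-(p * s)) * (s ^ (ν - 1) * mittagLeffler2 ν (-(c * s ^ ν))) with hg
  set F : ℕ → ℝ → ℝ := fun n s =>
    (s ^ (ν * (n + 1) - 1) * Real.exp (-(p * s))) * ((-c) ^ n / Real.Gamma (ν * (n + 1)))
    with hF
  have hP : 0 < p ^ ν := Real.rpow_pos_of_pos hp ν
  have hΓ : ∀ n : ℕ, 0 < Real.Gamma (ν * (n + 1)) := by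
    intro n
    apply Real.Gamma_pos_of_pos
    positivity
  have ha : ∀ n : ℕ, (0:ℝ) < ν * (n + 1) := by intro n; positivity
  -- integrability and integral of each term
  have hFint : ∀ n, IntegrableOn (F n) (Ioi 0) :=
    fun n => ((gamma_laplace (ha n) hp).1.mul_const _)
  have hFval : ∀ n, ∫ s in Ioi (0:ℝ), F n s
      = (1 / p) ^ (ν * (n + 1)) * (-c) ^ n := by
    intro n
    rw [hF]
    simp only []
    rw [MeasureTheory.integral_mul_const, (gamma_laplace (ha n) hp).2]
    field_simp
  -- norm integrals
  have hFnormval : ∀ n, ∫ s in Ioi (0:ℝ), ‖F n s‖ = (1 / p) ^ (ν * (n + 1)) * c ^ n := by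
    intro n
    have : ∀ s ∈ Ioi (0:ℝ), ‖F n s‖
        = (s ^ (ν * (n + 1) - 1) * Real.exp (-(p * s))) * (c ^ n / Real.Gamma (ν * (n + 1))) := by
      intro s hs
      rw [hF]
      simp only [norm_mul, norm_div, Real.norm_eq_abs, abs_pow, abs_neg, abs_of_pos hc,
        abs_of_pos (hΓ n), abs_of_pos (Real.exp_pos _),
        abs_of_pos (Real.rpow_pos_of_pos (mem_Ioi.mp hs) _)]
    rw [setIntegral_congr_fun measurableSet_Ioi this, MeasureTheory.integral_mul_const,
      (gamma_laplace (ha n) hp).2]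
    field_simp
  have hpow : ∀ n : ℕ, (1 / p : ℝ) ^ (ν * (n + 1)) = (p ^ ν)⁻¹ * ((p ^ ν)⁻¹) ^ n := by
    intro n
    rw [show (ν * ((n : ℝ) + 1)) = ν * (((n + 1 : ℕ) : ℝ)) by push_cast; ring,
      Real.rpow_mul (by positivity), Real.rpow_natCast, one_div,
      ← Real.inv_rpow hp.le, pow_succ]
    ring
  have hr : c / p ^ ν < 1 := (div_lt_one hP).mpr h
  have hsumnorm : Summable fun n => ∫ s in Ioi (0:ℝ), ‖F n s‖ := by
    have : Summable fun n : ℕ => (p ^ ν)⁻¹ * (c / p ^ ν) ^ n :=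
      (summable_geometric_of_lt_one (by positivity) hr).mul_left _
    refine this.congr fun n => ?_
    rw [hFnormval n, hpow n]
    rw [div_pow, div_eq_mul_inv, inv_pow]
    ring
  -- pointwise identity on Ioi 0
  have hpt : ∀ s ∈ Ioi (0:ℝ), g s = ∑' n, F n s := by
    intro s hs
    have hs0 : (0:ℝ) < s := hs
    rw [hg]
    simp only [mittagLeffler2]
    rw [← tsum_mul_left, ← tsum_mul_left]
    refine tsum_congr fun n => ?_
    have h1 : (-(c * s ^ ν)) ^ n = (-c) ^ n * s ^ (ν * n) := by
      rw [show -(c * s ^ ν) = (-c) * s ^ ν by ring, mul_pow, ← Real.rpow_natCast (s ^ ν) n,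
        ← Real.rpow_mul hs0.le]
    have h2 : s ^ (ν - 1) * s ^ (ν * n) = s ^ (ν * (n + 1) - 1) := by
      rw [← Real.rpow_add hs0]; ring_nf
    have h3 : Real.Gamma (ν * n + ν) = Real.Gamma (ν * (n + 1)) := by ring_nf
    simp only [hF]
    rw [h1, h3, ← h2]
    ring
  have hFaesm : ∀ n, AEStronglyMeasurable (F n) (volume.restrict (Ioi 0)) :=
    fun n => (hFint n).aestronglyMeasurable
  have hmeas : ∀ n, AEMeasurable (fun s => (‖F n s‖₊ : ENNReal)) (volume.restrict (Ioi 0)) :=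
    fun n => (hFaesm n).enorm
  have hlint : ∀ n, ∫⁻ s in Ioi (0:ℝ), (‖F n s‖₊ : ENNReal)
      = ENNReal.ofReal ((1 / p) ^ (ν * (n + 1)) * c ^ n) := by
    intro n
    rw [← hFnormval n, ofReal_integral_eq_lintegral_ofReal (hFint n).norm
      (Filter.Eventually.of_forall fun s => norm_nonneg _)]
    simp_rw [ofReal_norm, enorm_eq_nnnorm]
  have hsumnorm' : Summable fun n : ℕ => (1 / p : ℝ) ^ (ν * (n + 1)) * c ^ n := by
    refine hsumnorm.congr fun n => (hFnormval n)
  have hlintsum : ∑' n, ∫⁻ s in Ioi (0:ℝ), (‖F n s‖₊ : ENNReal) ≠ ⊤ := by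
    rw [tsum_congr hlint,
      ← ENNReal.ofReal_tsum_of_nonneg (fun n => by positivity) hsumnorm']
    exact ENNReal.ofReal_ne_top
  have hae : ∀ᵐ s ∂(volume.restrict (Ioi 0)), Summable fun n => ‖F n s‖ := by
    have h1 : ∫⁻ s in Ioi (0:ℝ), (∑' n, (‖F n s‖₊ : ENNReal)) ≠ ⊤ := by
      rw [lintegral_tsum hmeas]; exact hlintsum
    filter_upwards [ae_lt_top' (AEMeasurable.ennreal_tsum hmeas) h1] with s hs
    have := ENNReal.tsum_coe_ne_top_iff_summable_coe.mp hs.ne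
    simpa [coe_nnnorm] using this
  have hgaesm : AEStronglyMeasurable g (volume.restrict (Ioi 0)) := by
    refine aestronglyMeasurable_of_tendsto_ae (f := fun N s => ∑ n ∈ Finset.range N, F n s)
      Filter.atTop
      (fun N => Finset.aestronglyMeasurable_fun_sum _ fun n _ => hFaesm n) ?_
    filter_upwards [hae, ae_restrict_mem measurableSet_Ioi] with s hsum hs
    rw [hpt s hs]
    exact (hsum.of_norm).hasSum.tendsto_sum_nat
  have hbound : ∀ᵐ s ∂(volume.restrict (Ioi 0)),
      (‖g s‖₊ : ENNReal) ≤ ∑' n, (‖F n s‖₊ : ENNReal) := by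
    filter_upwards [hae, ae_restrict_mem measurableSet_Ioi] with s hsum hs
    rw [hpt s hs, ← enorm_eq_nnnorm, ← ofReal_norm]
    calc ENNReal.ofReal ‖∑' n, F n s‖
        ≤ ENNReal.ofReal (∑' n, ‖F n s‖) :=
          ENNReal.ofReal_le_ofReal (norm_tsum_le_tsum_norm hsum)
      _ = ∑' n, ENNReal.ofReal ‖F n s‖ :=
          ENNReal.ofReal_tsum_of_nonneg (fun n => norm_nonneg _) hsum
      _ = ∑' n, (‖F n s‖₊ : ENNReal) := by simp_rw [ofReal_norm, enorm_eq_nnnorm]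
  have hgfin : HasFiniteIntegral g (volume.restrict (Ioi 0)) := by
    refine lt_of_le_of_lt (lintegral_mono_ae hbound) ?_
    rw [lintegral_tsum hmeas]
    exact lt_top_iff_ne_top.mpr hlintsum
  have hgint : IntegrableOn g (Ioi 0) := ⟨hgaesm, hgfin⟩
  refine ⟨hgint, ?_⟩
  have hHS : HasSum (fun n => ∫ s in Ioi (0:ℝ), F n s) (∫ s in Ioi (0:ℝ), ∑' n, F n s) :=
    hasSum_integral_of_summable_integral_norm hFint hsumnorm
  have hval : ∫ s in Ioi (0:ℝ), g s = ∑' n, ∫ s in Ioi (0:ℝ), F n s := by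
    rw [setIntegral_congr_fun measurableSet_Ioi hpt, hHS.tsum_eq]
  have hx : ‖-(c / p ^ ν)‖ < 1 := by
    rw [norm_neg, Real.norm_eq_abs, abs_of_pos (by positivity)]
    exact hr
  calc ∫ s in Ioi (0:ℝ), g s = ∑' n, ∫ s in Ioi (0:ℝ), F n s := hval
    _ = ∑' n : ℕ, (p ^ ν)⁻¹ * (-(c / p ^ ν)) ^ n := by
        refine tsum_congr fun n => ?_
        rw [hFval n, hpow n, show -(c / p ^ ν) = (-c) * (p ^ ν)⁻¹ by ring, mul_pow]
        ring
    _ = (p ^ ν)⁻¹ * (1 - (-(c / p ^ ν)))⁻¹ := by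
        rw [tsum_mul_left, tsum_geometric_of_norm_lt_one hx]
    _ = 1 / (p ^ ν + c) := by
        rw [sub_neg_eq_add]
        field_simp

lemma key_sum (k : ℕ) : ∀ x : ℝ, 0 < x →
    ∑ l ∈ Finset.range (k + 1), (-1 : ℝ) ^ l * (k.choose l : ℝ) / (x + l)
      = (k.factorial : ℝ) / ∏ j ∈ Finset.range (k + 1), (x + j) := by
  induction k with
  | zero => intro x hx; simp
  | succ k ih =>
    intro x hx
    have hprod : ∀ y : ℝ, 0 < y → (0:ℝ) < ∏ j ∈ Finset.range (k + 1), (y + j) := by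
      intro y hy
      exact Finset.prod_pos fun j _ => by positivity
    have ihx := ih x hx
    have ihx1 := ih (x + 1) (by linarith)
    -- rewrite the (x+1)-product
    have hshift : ∏ j ∈ Finset.range (k + 1), (x + 1 + (j : ℝ))
        = ∏ j ∈ Finset.range (k + 1), (x + ((j : ℝ) + 1)) := by
      refine Finset.prod_congr rfl fun j _ => by ring
    have hsplit : ∏ j ∈ Finset.range (k + 2), (x + (j : ℝ))
        = (∏ j ∈ Finset.range (k + 1), (x + ((j : ℝ) + 1))) * x := by
      rw [Finset.prod_range_succ' (fun j => (x + (j : ℝ))) (k + 1)]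
      push_cast
      norm_num
    have hsplit2 : ∏ j ∈ Finset.range (k + 2), (x + (j : ℝ))
        = (∏ j ∈ Finset.range (k + 1), (x + (j : ℝ))) * (x + (k + 1)) := by
      rw [Finset.prod_range_succ]
      push_cast
      ring_nf
    -- main sum manipulation
    rw [Finset.sum_range_succ' (fun l => (-1 : ℝ) ^ l * ((k+1).choose l : ℝ) / (x + l)) (k + 1)]
    have hterm : ∀ m ∈ Finset.range (k + 1),
        (-1 : ℝ) ^ (m+1) * (((k+1).choose (m+1) : ℕ) : ℝ) / (x + (m+1 : ℕ))
        = -((-1 : ℝ) ^ m * (k.choose m : ℝ) / ((x+1) + m))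
          + (-1 : ℝ) ^ (m+1) * (k.choose (m+1) : ℝ) / (x + ((m+1 : ℕ) : ℝ)) := by
      intro m hm
      rw [Nat.choose_succ_succ]
      push_cast
      have : x + (m + 1 : ℝ) ≠ 0 := by positivity
      field_simp
      ring
    rw [Finset.sum_congr rfl hterm, Finset.sum_add_distrib, Finset.sum_neg_distrib]
    rw [ihx1]
    have hB : ∑ m ∈ Finset.range (k + 1),
        (-1 : ℝ) ^ (m + 1) * (k.choose (m + 1) : ℝ) / (x + ((m + 1 : ℕ) : ℝ))
        + (-1 : ℝ) ^ (0:ℕ) * (((k+1).choose 0 : ℕ) : ℝ) / (x + ((0 : ℕ) : ℝ))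
        = ∑ l ∈ Finset.range (k + 2), (-1 : ℝ) ^ l * (k.choose l : ℝ) / (x + l) := by
      rw [Finset.sum_range_succ' (fun l => (-1 : ℝ) ^ l * (k.choose l : ℝ) / (x + l)) (k + 1)]
      norm_num
    rw [add_assoc]
    push_cast at hB ⊢
    rw [hB, Finset.sum_range_succ, Nat.choose_succ_self]
    push_cast
    rw [ihx]
    have h1 : (0:ℝ) < ∏ j ∈ Finset.range (k + 1), (x + (j:ℝ)) := hprod x hx
    have h2 : (0:ℝ) < ∏ j ∈ Finset.range (k + 1), (x + 1 + (j:ℝ)) := hprod (x+1) (by linarith)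
    have hfac : ((k+1).factorial : ℝ) = (k+1) * (k.factorial : ℝ) := by
      rw [Nat.factorial_succ]; push_cast; ring
    rw [hfac]
    have hQ2 : ∏ j ∈ Finset.range (k + 1 + 1), (x + (j:ℝ))
        = (∏ j ∈ Finset.range (k + 1), (x + (j:ℝ))) * (x + ((k:ℝ) + 1)) := hsplit2
    have hrel : (∏ j ∈ Finset.range (k + 1), (x + 1 + (j:ℝ))) * x
        = (∏ j ∈ Finset.range (k + 1), (x + (j:ℝ))) * (x + ((k:ℝ) + 1)) := by
      rw [hshift, ← hsplit, hsplit2]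
    rw [hQ2]
    have hx1 : x + ((k:ℝ) + 1) ≠ 0 := by positivity
    have hBval : ∏ j ∈ Finset.range (k + 1), (x + 1 + (j:ℝ))
        = (∏ j ∈ Finset.range (k + 1), (x + (j:ℝ))) * (x + ((k:ℝ) + 1)) / x := by
      rw [eq_div_iff hx.ne']; exact hrel
    rw [hBval]
    rw [mul_zero, zero_div, add_zero]
    field_simp
    ring

lemma gamma_prod (x : ℝ) (hx : 0 < x) (k : ℕ) :
    Real.Gamma (x + k) = Real.Gamma x * ∏ j ∈ Finset.range k, (x + j) := by
  induction k with
  | zero => simp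
  | succ k ih =>
    have hne : x + (k:ℝ) ≠ 0 := by positivity
    have h1 : x + ((k+1 : ℕ):ℝ) = (x + k) + 1 := by push_cast; ring
    rw [h1, Real.Gamma_add_one hne, ih, Finset.prod_range_succ]
    ring

lemma key_sum2 (k : ℕ) (hk : 1 ≤ k) (x : ℝ) (hx : 0 < x) :
    ∑ l ∈ Finset.Icc 1 k, (k.choose l : ℝ) * (-1:ℝ)^(l-1) * ((l:ℝ)/(x+(l:ℝ)))
      = (k.factorial : ℝ) / ∏ j ∈ Finset.range k, (x + 1 + (j:ℝ)) := by
  have herase : Finset.Icc 1 k = (Finset.range (k+1)).erase 0 := by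
    ext a
    simp [Nat.lt_succ_iff, Nat.one_le_iff_ne_zero]

  have bridge : ∀ f : ℕ → ℝ,
      f 0 + ∑ l ∈ Finset.Icc 1 k, f l = ∑ l ∈ Finset.range (k+1), f l := by
    intro f; rw [herase]; exact Finset.add_sum_erase _ f (by simp)
  have hterm : ∀ l ∈ Finset.Icc 1 k, (k.choose l : ℝ) * (-1:ℝ)^(l-1) * ((l:ℝ)/(x+(l:ℝ)))
      = (-((-1:ℝ)^l * (k.choose l : ℝ))) + x * ((-1:ℝ)^l * (k.choose l : ℝ)/(x+(l:ℝ))) := by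
    intro l hl
    have h1 : 1 ≤ l := (Finset.mem_Icc.mp hl).1
    obtain ⟨m, rfl⟩ : ∃ m, l = m + 1 := ⟨l - 1, by omega⟩
    have hxl : x + ((m+1:ℕ):ℝ) ≠ 0 := by positivity
    simp only [Nat.add_sub_cancel]
    push_cast at hxl ⊢
    rw [pow_succ]
    field_simp
    ring
  rw [Finset.sum_congr rfl hterm, Finset.sum_add_distrib]
  have hS1 : ∑ l ∈ Finset.Icc 1 k, (-((-1:ℝ)^l * (k.choose l : ℝ))) = 1 := by
    have h0 : ∑ l ∈ Finset.range (k+1), (-1:ℝ)^l * (k.choose l : ℝ) = 0 := by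
      have h := Int.alternating_sum_range_choose_of_ne (n := k) (by omega)
      have := congrArg (fun z : ℤ => (z : ℝ)) h
      push_cast at this
      simpa using this
    have hb := bridge (fun l => (-1:ℝ)^l * (k.choose l : ℝ))
    simp only [pow_zero, Nat.choose_zero_right, Nat.cast_one, one_mul] at hb
    rw [Finset.sum_neg_distrib]
    rw [h0] at hb
    linarith
  have hS2 : ∑ l ∈ Finset.Icc 1 k, (-1:ℝ)^l * (k.choose l : ℝ)/(x+(l:ℝ))
      = (k.factorial : ℝ) / ∏ j ∈ Finset.range (k+1), (x + (j:ℝ)) - 1/x := by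
    have hb := bridge (fun l => (-1:ℝ)^l * (k.choose l : ℝ)/(x+(l:ℝ)))
    simp only [pow_zero, Nat.choose_zero_right, Nat.cast_one, one_mul, Nat.cast_zero,
      add_zero] at hb
    rw [key_sum k x hx] at hb
    linarith
  have hmulsum : ∑ l ∈ Finset.Icc 1 k, x * ((-1:ℝ)^l * (k.choose l : ℝ)/(x+(l:ℝ)))
      = x * ∑ l ∈ Finset.Icc 1 k, (-1:ℝ)^l * (k.choose l : ℝ)/(x+(l:ℝ)) := by
    rw [Finset.mul_sum]
  rw [hS1, hmulsum, hS2]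
  have hsplit : ∏ j ∈ Finset.range (k+1), (x + (j:ℝ))
      = (∏ j ∈ Finset.range k, (x + ((j:ℝ)+1))) * x := by
    rw [Finset.prod_range_succ' (fun j => (x + (j:ℝ))) k]
    push_cast
    norm_num
  have hshift : ∏ j ∈ Finset.range k, (x + 1 + (j:ℝ))
      = ∏ j ∈ Finset.range k, (x + ((j:ℝ)+1)) := by
    exact Finset.prod_congr rfl fun j _ => by ring
  have hp1 : (0:ℝ) < ∏ j ∈ Finset.range k, (x + ((j:ℝ)+1)) :=
    Finset.prod_pos fun j _ => by positivity
  rw [hsplit, hshift]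
  field_simp
  ring

/-- the probability generating function of the Poisson process composed with
the inverse `φ_k^ν` of an independent fractional linear pure birth process:
`∫_0^∞ e^{−λ_α(1−u)s} Σ_{l=1}^k C(k,l)(−1)^{l−1} λ_β l s^{ν−1} E_{ν,ν}(−λ_β l s^ν) ds
 = k! Γ(x+1)/Γ(x+1+k)` with `x = λ_α^ν(1−u)^ν/λ_β`. -/
theorem pgf_poisson_at_inverse_fractional_birth (ν lα lβ u : ℝ)
    (hν : ν ∈ Set.Ioc (0 : ℝ) 1) (hα : 0 < lα) (hβ : 0 < lβ) (k : ℕ) (hk : 1 ≤ k)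
    (hu : u ∈ Set.Ico (0 : ℝ) 1) (hcond : (k : ℝ) * lβ < lα ^ ν * (1 - u) ^ ν) :
    ∫ s in Set.Ioi (0 : ℝ), Real.exp (-lα * (1 - u) * s) *
      ∑ l ∈ Finset.Icc 1 k, (k.choose l : ℝ) * (-1 : ℝ) ^ (l - 1) *
        (lβ * l * s ^ (ν - 1) * mittagLeffler2 ν (-lβ * l * s ^ ν)) =
    (Nat.factorial k : ℝ) * Real.Gamma (lα ^ ν * (1 - u) ^ ν / lβ + 1) /
      Real.Gamma (lα ^ ν * (1 - u) ^ ν / lβ + 1 + k) := by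
  obtain ⟨hν0, hν1⟩ := hν
  obtain ⟨hu0, hu1⟩ := hu
  have h1u : (0:ℝ) < 1 - u := by linarith
  set p : ℝ := lα * (1 - u) with hpdef
  have hp : 0 < p := mul_pos hα h1u
  have hPeq : lα ^ ν * (1 - u) ^ ν = p ^ ν := (Real.mul_rpow hα.le h1u.le).symm
  have hXpos : 0 < p ^ ν := Real.rpow_pos_of_pos hp ν
  -- per-l facts
  have hcl : ∀ l ∈ Finset.Icc 1 k, (0:ℝ) < lβ * l ∧ lβ * l < p ^ ν := by
    intro l hl
    obtain ⟨h1, h2⟩ := Finset.mem_Icc.mp hl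
    have hl0 : (0:ℝ) < l := by exact_mod_cast h1
    refine ⟨mul_pos hβ hl0, ?_⟩
    have : lβ * (l:ℝ) ≤ lβ * (k:ℝ) := by
      have : (l:ℝ) ≤ k := by exact_mod_cast h2
      nlinarith
    calc lβ * (l:ℝ) ≤ (k:ℝ) * lβ := by linarith
      _ < p ^ ν := by rwa [hPeq] at hcond
  -- rewrite integrand
  have hfun : ∀ s : ℝ, Real.exp (-lα * (1 - u) * s) *
      ∑ l ∈ Finset.Icc 1 k, (k.choose l : ℝ) * (-1 : ℝ) ^ (l - 1) *
        (lβ * l * s ^ (ν - 1) * mittagLeffler2 ν (-lβ * l * s ^ ν))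
      = ∑ l ∈ Finset.Icc 1 k, ((k.choose l : ℝ) * (-1 : ℝ) ^ (l - 1) * (lβ * l)) *
        (Real.exp (-(p * s)) * (s ^ (ν - 1) * mittagLeffler2 ν (-(lβ * l * s ^ ν)))) := by
    intro s
    rw [Finset.mul_sum]
    refine Finset.sum_congr rfl fun l hl => ?_
    have hz : -lβ * (l:ℝ) * s ^ ν = -(lβ * (l:ℝ) * s ^ ν) := by ring
    have he : -lα * (1 - u) * s = -(p * s) := by rw [hpdef]; ring
    rw [hz, he]
    ring
  rw [MeasureTheory.integral_congr_ae (Filter.Eventually.of_forall fun s => hfun s)]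
  rw [MeasureTheory.integral_finset_sum _ (fun l hl => ((laplace_ML hν0 hp (hcl l hl).1
    (hcl l hl).2).1.const_mul _))]
  have hval : ∀ l ∈ Finset.Icc 1 k,
      ∫ s in Ioi (0:ℝ), ((k.choose l : ℝ) * (-1 : ℝ) ^ (l - 1) * (lβ * l)) *
        (Real.exp (-(p * s)) * (s ^ (ν - 1) * mittagLeffler2 ν (-(lβ * l * s ^ ν))))
      = (k.choose l : ℝ) * (-1 : ℝ) ^ (l - 1) * ((l:ℝ) / (p ^ ν / lβ + (l:ℝ))) := by
    intro l hl
    rw [integral_const_mul, (laplace_ML hν0 hp (hcl l hl).1 (hcl l hl).2).2]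
    have h1 : (0:ℝ) < p ^ ν + lβ * l := by positivity
    have h2 : (0:ℝ) < p ^ ν / lβ + (l:ℝ) := by positivity
    field_simp
  rw [Finset.sum_congr rfl hval, key_sum2 k hk _ (by positivity)]
  -- RHS
  rw [hPeq, gamma_prod (p ^ ν / lβ + 1) (by positivity) k]
  have hΓpos : 0 < Real.Gamma (p ^ ν / lβ + 1) := Real.Gamma_pos_of_pos (by positivity)
  have hprodpos : 0 < ∏ j ∈ Finset.range k, (p ^ ν / lβ + 1 + (j:ℝ)) :=
    Finset.prod_pos fun j _ => by positivity
  field_simp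
end

section
/- Let λ > 0 and 0 < s < t. On a probability space let (X_j)_{j≥1} be i.i.d. real random variables with E[|X_1|] < ∞ and E[X_1²] < ∞, let M be Poisson with parameter λs and K Poisson with parameter λ(t−s), with (X_j), M, K jointly independent. Define N_π(s) = ∏_{j=1}^{M} X_j and N_π(t) = ∏_{j=1}^{M+K} X_j (empty products equal 1). Then E[N_π(t) · N_π(s)] = e^{λ s (E[X²] − 1)} · e^{λ (t−s)(E[X] − 1)}, and consequently Cov(N_π(t), N_π(s)) = e^{λ t (E[X] − 1)} · (e^{λ s E[X(X−1)]} − e^{λ s (E[X] − 1)}), where X = X_1. -/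
open MeasureTheory ProbabilityTheory

/-- The joint family consisting of the factors `X j` (indices `Sum.inl j`) and the two
Poisson counting variables `M` (index `Sum.inr true`) and `K` (index `Sum.inr false`). -/
def covFam {Ω : Type*} (X : ℕ → Ω → ℝ) (M K : Ω → ℕ) :
    (i : ℕ ⊕ Bool) → Ω → Sum.elim (fun _ : ℕ => ℝ) (fun _ : Bool => ℕ) i
  | Sum.inl j => X j
  | Sum.inr true => M
  | Sum.inr false => K

/-- The canonical measurable-space structure on the codomains of `covFam`. -/
def covMS : (i : ℕ ⊕ Bool) → MeasurableSpace (Sum.elim (fun _ : ℕ => ℝ) (fun _ : Bool => ℕ) i)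
  | Sum.inl _ => (inferInstance : MeasurableSpace ℝ)
  | Sum.inr _ => (inferInstance : MeasurableSpace ℕ)



private lemma poisson_tsum (c x : ℝ) :
    ∑' m : ℕ, (Real.exp (-c) * c ^ m / (Nat.factorial m)) * x ^ m = Real.exp (c * (x - 1)) := by
  have h1 : ∀ m : ℕ, (Real.exp (-c) * c ^ m / (Nat.factorial m)) * x ^ m
      = Real.exp (-c) * ((c * x) ^ m / (Nat.factorial m)) := by
    intro m; rw [mul_pow]; ring
  rw [tsum_congr h1, tsum_mul_left]
  have h2 : ∑' m : ℕ, (c * x) ^ m / (Nat.factorial m) = Real.exp (c * x) := by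
    rw [Real.exp_eq_exp_ℝ, NormedSpace.exp_eq_tsum_div]
  rw [h2, ← Real.exp_add]; ring_nf

private lemma indep_prod_integral {ι : Type*} {Ω : Type*} [MeasurableSpace Ω] {μ : Measure Ω}
    [IsProbabilityMeasure μ] {g : ι → Ω → ℝ}
    (hindep : iIndepFun (m := fun _ => (inferInstance : MeasurableSpace ℝ)) g μ)
    (hmeas : ∀ i, Measurable (g i)) (hint : ∀ i, Integrable (g i) μ) (S : Finset ι) :
    Integrable (fun ω => ∏ i ∈ S, g i ω) μ ∧
      ∫ ω, ∏ i ∈ S, g i ω ∂μ = ∏ i ∈ S, ∫ ω, g i ω ∂μ := by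
  classical
  refine Finset.induction_on S (by simp) ?_
  intro i S hiS ih
  have hpair : IndepFun (∏ j ∈ S, g j) (g i) μ :=
    hindep.indepFun_finsetProd_of_notMem hmeas hiS
  have hprodfun : (∏ j ∈ S, g j) = fun ω => ∏ j ∈ S, g j ω := by
    funext ω; simp [Finset.prod_apply]
  rw [hprodfun] at hpair
  have hmul : Integrable (fun ω => (∏ j ∈ S, g j ω) * g i ω) μ :=
    hpair.integrable_mul ih.1 (hint i)
  have heq : (fun ω => ∏ j ∈ insert i S, g j ω) = fun ω => (∏ j ∈ S, g j ω) * g i ω := by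
    funext ω; rw [Finset.prod_insert hiS, mul_comm]
  constructor
  · rw [heq]; exact hmul
  · rw [heq, Finset.prod_insert hiS]
    have := hpair.integral_mul_eq_mul_integral ih.1.aestronglyMeasurable (hint i).aestronglyMeasurable
    rw [show ((fun ω => ∏ j ∈ S, g j ω) * g i) = fun ω => (∏ j ∈ S, g j ω) * g i ω from rfl] at this
    rw [this, ih.2, mul_comm]

private lemma integral_ite_eq {Ω : Type*} [MeasurableSpace Ω] (μ : Measure Ω)
    {N : Ω → ℕ} (hN : Measurable N) (m : ℕ) :
    ∫ ω, (if N ω = m then (1:ℝ) else 0) ∂μ = (μ {ω | N ω = m}).toReal := by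
  have h : (fun ω => if N ω = m then (1:ℝ) else 0)
      = Set.indicator {ω | N ω = m} (fun _ => (1:ℝ)) := by
    funext ω; simp [Set.indicator_apply, Set.mem_setOf_eq]
  have hs : MeasurableSet {ω | N ω = m} := hN (measurableSet_singleton m)
  rw [h, integral_indicator_const (1:ℝ) hs]; simp [measureReal_def]

private lemma event_facts {Ω : Type*} [MeasurableSpace Ω] (μ : Measure Ω)
    [IsProbabilityMeasure μ] (X : ℕ → Ω → ℝ) (M K : Ω → ℕ)
    (hXmeas : ∀ j, Measurable (X j)) (hMmeas : Measurable M) (hKmeas : Measurable K)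
    (hindep : iIndepFun (m := covMS) (covFam X M K) μ)
    (q : ℕ → ℕ → ℝ → ℝ) (hqmeas : ∀ m j, Measurable (q m j))
    (hint : ∀ m j, Integrable (fun ω => q m j (X j ω)) μ) (m k : ℕ) :
    Integrable (fun ω => (∏ j ∈ Finset.range (m + k), q m j (X j ω)) *
        ((if M ω = m then (1:ℝ) else 0) * (if K ω = k then (1:ℝ) else 0))) μ ∧
    ∫ ω, (∏ j ∈ Finset.range (m + k), q m j (X j ω)) *
        ((if M ω = m then (1:ℝ) else 0) * (if K ω = k then (1:ℝ) else 0)) ∂μ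
      = (∏ j ∈ Finset.range (m + k), ∫ ω, q m j (X j ω) ∂μ) *
        ((μ {ω | M ω = m}).toReal * (μ {ω | K ω = k}).toReal) := by
  classical
  set g : (i : ℕ ⊕ Bool) → Ω → ℝ := fun i => match i with
    | Sum.inl j => fun ω => q m j (X j ω)
    | Sum.inr true => fun ω => if M ω = m then (1:ℝ) else 0
    | Sum.inr false => fun ω => if K ω = k then (1:ℝ) else 0
    with hg_def
  have hg_meas : ∀ i, Measurable (g i) := by
    rintro (j | b)
    · exact (hqmeas m j).comp (hXmeas j)
    · cases b
      · exact Measurable.ite (hKmeas (measurableSet_singleton k)) measurable_const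
          measurable_const
      · exact Measurable.ite (hMmeas (measurableSet_singleton m)) measurable_const
          measurable_const
  have hg_int : ∀ i, Integrable (g i) μ := by
    rintro (j | b)
    · exact hint m j
    · cases b
      · have h : g (Sum.inr false) = Set.indicator {ω | K ω = k} (fun _ => (1:ℝ)) := by
          funext ω; simp [hg_def, Set.indicator_apply, Set.mem_setOf_eq]
        rw [h]
        exact (integrable_const (1:ℝ)).indicator (hKmeas (measurableSet_singleton k))
      · have h : g (Sum.inr true) = Set.indicator {ω | M ω = m} (fun _ => (1:ℝ)) := by
          funext ω; simp [hg_def, Set.indicator_apply, Set.mem_setOf_eq]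
        rw [h]
        exact (integrable_const (1:ℝ)).indicator (hMmeas (measurableSet_singleton m))
  set φ : (i : ℕ ⊕ Bool) → (Sum.elim (fun _ : ℕ => ℝ) (fun _ : Bool => ℕ) i) → ℝ :=
    fun i => match i with
    | Sum.inl j => q m j
    | Sum.inr true => fun n => if n = m then (1:ℝ) else 0
    | Sum.inr false => fun n => if n = k then (1:ℝ) else 0
  have hφ : ∀ i, @Measurable _ _ (covMS i) _ (φ i) := by
    rintro (j | b)
    · exact hqmeas m j
    · cases b <;> exact measurable_from_top
  have hg_indep : iIndepFun (m := fun _ => (inferInstance : MeasurableSpace ℝ)) g μ := by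
    have h := hindep.comp φ hφ
    have he : (fun i => φ i ∘ covFam X M K i) = g := by
      funext i ω; rcases i with j | b
      · rfl
      · cases b <;> simp [covFam, φ, hg_def, Function.comp] <;> congr
    rwa [he] at h
  have key := indep_prod_integral hg_indep hg_meas hg_int
    (((Finset.range (m + k)).image Sum.inl) ∪ {Sum.inr true, Sum.inr false})
  have hdisj : Disjoint ((Finset.range (m + k)).image Sum.inl)
      ({Sum.inr true, Sum.inr false} : Finset (ℕ ⊕ Bool)) := by
    simp [Finset.disjoint_left]
  have htf : (Sum.inr true : ℕ ⊕ Bool) ∉ ({Sum.inr false} : Finset (ℕ ⊕ Bool)) := by simp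
  have hsplit : ∀ v : (ℕ ⊕ Bool) → ℝ,
      (∏ i ∈ ((Finset.range (m + k)).image Sum.inl) ∪ {Sum.inr true, Sum.inr false}, v i)
        = (∏ j ∈ Finset.range (m + k), v (Sum.inl j)) * (v (Sum.inr true) * v (Sum.inr false)) := by
    intro v
    rw [Finset.prod_union hdisj, Finset.prod_image (by intro a _ b _ h; exact Sum.inl.inj h),
      Finset.prod_insert htf, Finset.prod_singleton]
  have hfun : (fun ω => ∏ i ∈ ((Finset.range (m + k)).image Sum.inl)
        ∪ {Sum.inr true, Sum.inr false}, g i ω)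
      = fun ω => (∏ j ∈ Finset.range (m + k), q m j (X j ω)) *
        ((if M ω = m then (1:ℝ) else 0) * (if K ω = k then (1:ℝ) else 0)) := by
    funext ω; exact hsplit (fun i => g i ω)
  rw [hfun] at key
  refine ⟨key.1, ?_⟩
  rw [key.2, hsplit (fun i => ∫ ω, g i ω ∂μ)]
  have h1 : ∫ ω, g (Sum.inr true) ω ∂μ = (μ {ω | M ω = m}).toReal := integral_ite_eq μ hMmeas m
  have h2 : ∫ ω, g (Sum.inr false) ω ∂μ = (μ {ω | K ω = k}).toReal := integral_ite_eq μ hKmeas k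
  rw [h1, h2]
set_option maxHeartbeats 2000000 in
private lemma master {Ω : Type*} [MeasurableSpace Ω] (μ : Measure Ω) [IsProbabilityMeasure μ]
    (X : ℕ → Ω → ℝ) (M K : Ω → ℕ)
    (hXmeas : ∀ j, Measurable (X j)) (hMmeas : Measurable M) (hKmeas : Measurable K)
    (hindep : iIndepFun (m := covMS) (covFam X M K) μ)
    (q : ℕ → ℕ → ℝ → ℝ) (hqmeas : ∀ m j, Measurable (q m j))
    (α β A B : ℝ)
    (hint : ∀ m j, Integrable (fun ω => q m j (X j ω)) μ)
    (hval : ∀ m j, j < m → ∫ ω, q m j (X j ω) ∂μ = β)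
    (hval' : ∀ m j, m ≤ j → ∫ ω, q m j (X j ω) ∂μ = α)
    (habs : ∀ m j, j < m → ∫ ω, |q m j (X j ω)| ∂μ ≤ B)
    (habs' : ∀ m j, m ≤ j → ∫ ω, |q m j (X j ω)| ∂μ ≤ A)
    (pM pK : ℕ → ℝ) (hpM0 : ∀ m, 0 ≤ pM m) (hpK0 : ∀ k, 0 ≤ pK k)
    (hpM : ∀ m, μ {ω | M ω = m} = ENNReal.ofReal (pM m))
    (hpK : ∀ k, μ {ω | K ω = k} = ENNReal.ofReal (pK k))
    (hMsum : Summable fun m => pM m * B ^ m) (hKsum : Summable fun k => pK k * A ^ k) :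
    ∫ ω, ∏ j ∈ Finset.range (M ω + K ω), q (M ω) j (X j ω) ∂μ =
      (∑' m, pM m * β ^ m) * (∑' k, pK k * α ^ k) := by
  classical
  have hB0 : 0 ≤ B := le_trans (integral_nonneg fun ω => abs_nonneg _) (habs 1 0 one_pos)
  have hA0 : 0 ≤ A := le_trans (integral_nonneg fun ω => abs_nonneg _) (habs' 0 0 le_rfl)
  have hβB : |β| ≤ B := by
    rw [← hval 1 0 one_pos]
    calc |∫ ω, q 1 0 (X 0 ω) ∂μ| ≤ ∫ ω, |q 1 0 (X 0 ω)| ∂μ := by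
          simpa [Real.norm_eq_abs] using norm_integral_le_integral_norm (fun ω => q 1 0 (X 0 ω)) (μ := μ)
      _ ≤ B := habs 1 0 one_pos
  have hαA : |α| ≤ A := by
    rw [← hval' 0 0 le_rfl]
    calc |∫ ω, q 0 0 (X 0 ω) ∂μ| ≤ ∫ ω, |q 0 0 (X 0 ω)| ∂μ := by
          simpa [Real.norm_eq_abs] using norm_integral_le_integral_norm (fun ω => q 0 0 (X 0 ω)) (μ := μ)
      _ ≤ A := habs' 0 0 le_rfl
  set F : ℕ × ℕ → Ω → ℝ := fun p ω => (∏ j ∈ Finset.range (p.1 + p.2), q p.1 j (X j ω)) *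
      ((if M ω = p.1 then (1:ℝ) else 0) * (if K ω = p.2 then (1:ℝ) else 0)) with hF_def
  -- pointwise tsum representation
  have hpt : ∀ ω, ∏ j ∈ Finset.range (M ω + K ω), q (M ω) j (X j ω) = ∑' p, F p ω := by
    intro ω
    have hz : ∀ p : ℕ × ℕ, p ≠ (M ω, K ω) → F p ω = 0 := by
      rintro ⟨m, k⟩ hp
      by_cases hm : M ω = m
      · have hk : K ω ≠ k := by rintro rfl; exact hp (by rw [hm])
        simp [hF_def, hk]
      · simp [hF_def, hm]
    rw [tsum_eq_single (M ω, K ω) hz]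
    simp [hF_def]
  -- facts per (m, k)
  have hev := event_facts μ X M K hXmeas hMmeas hKmeas hindep q hqmeas hint
  have hev' := event_facts μ X M K hXmeas hMmeas hKmeas hindep
    (fun m j x => |q m j x|) (fun m j => (hqmeas m j).abs)
    (fun m j => (hint m j).abs)
  -- value of ∫ F p
  have hprodval : ∀ m k : ℕ, (∏ j ∈ Finset.range (m + k), ∫ ω, q m j (X j ω) ∂μ)
      = β ^ m * α ^ k := by
    intro m k
    rw [Finset.prod_range_add]
    congr 1
    · rw [Finset.prod_congr rfl fun j hj => hval m j (Finset.mem_range.mp hj)]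
      simp
    · rw [Finset.prod_congr rfl fun j _ => hval' m (m + j) (Nat.le_add_right m j)]
      simp
  have hFint : ∀ p : ℕ × ℕ, Integrable (F p) μ := fun p => (hev p.1 p.2).1
  have hFval : ∀ p : ℕ × ℕ, ∫ ω, F p ω ∂μ = (pM p.1 * β ^ p.1) * (pK p.2 * α ^ p.2) := by
    rintro ⟨m, k⟩
    have := (hev m k).2
    rw [hF_def]
    simp only []
    rw [this, hprodval, hpM, hpK, ENNReal.toReal_ofReal (hpM0 m),
      ENNReal.toReal_ofReal (hpK0 k)]
    ring
  -- bound on ∫ |F p|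
  have hFabs : ∀ p : ℕ × ℕ, ∫ ω, |F p ω| ∂μ ≤ (pM p.1 * B ^ p.1) * (pK p.2 * A ^ p.2) := by
    rintro ⟨m, k⟩
    have habs_eq : (fun ω => |F (m, k) ω|) = fun ω =>
        (∏ j ∈ Finset.range (m + k), |q m j (X j ω)|) *
        ((if M ω = m then (1:ℝ) else 0) * (if K ω = k then (1:ℝ) else 0)) := by
      funext ω
      rw [hF_def]
      simp only [abs_mul, Finset.abs_prod]
      congr 1
      by_cases hm : M ω = m <;> by_cases hk : K ω = k <;> simp [hm, hk]
    rw [habs_eq, (hev' m k).2, hpM, hpK, ENNReal.toReal_ofReal (hpM0 m),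
      ENNReal.toReal_ofReal (hpK0 k)]
    have hb : (∏ j ∈ Finset.range (m + k), ∫ ω, |q m j (X j ω)| ∂μ) ≤ B ^ m * A ^ k := by
      rw [Finset.prod_range_add]
      have h1 : (∏ j ∈ Finset.range m, ∫ ω, |q m j (X j ω)| ∂μ) ≤ B ^ m := by
        calc (∏ j ∈ Finset.range m, ∫ ω, |q m j (X j ω)| ∂μ)
            ≤ ∏ _j ∈ Finset.range m, B := Finset.prod_le_prod
              (fun j _ => integral_nonneg fun ω => abs_nonneg _)
              (fun j hj => habs m j (Finset.mem_range.mp hj))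
          _ = B ^ m := by simp
      have h2 : (∏ j ∈ Finset.range k, ∫ ω, |q m (m + j) (X (m + j) ω)| ∂μ) ≤ A ^ k := by
        calc (∏ j ∈ Finset.range k, ∫ ω, |q m (m + j) (X (m + j) ω)| ∂μ)
            ≤ ∏ _j ∈ Finset.range k, A := Finset.prod_le_prod
              (fun j _ => integral_nonneg fun ω => abs_nonneg _)
              (fun j _ => habs' m (m + j) (Nat.le_add_right m j))
          _ = A ^ k := by simp
      exact mul_le_mul h1 h2 (Finset.prod_nonneg fun j _ =>
        integral_nonneg fun ω => abs_nonneg _) (pow_nonneg hB0 m)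
    calc (∏ j ∈ Finset.range (m + k), ∫ ω, |q m j (X j ω)| ∂μ) * (pM m * pK k)
        ≤ (B ^ m * A ^ k) * (pM m * pK k) := by
          apply mul_le_mul_of_nonneg_right hb (mul_nonneg (hpM0 m) (hpK0 k))
      _ = (pM m * B ^ m) * (pK k * A ^ k) := by ring
  -- summability of the lintegrals of norms
  have hnormF : ∀ p : ℕ × ℕ, ∫⁻ ω, ‖F p ω‖ₑ ∂μ
      ≤ ENNReal.ofReal (pM p.1 * B ^ p.1) * ENNReal.ofReal (pK p.2 * A ^ p.2) := by
    intro p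
    rw [← ofReal_integral_norm_eq_lintegral_enorm (hFint p),
      ← ENNReal.ofReal_mul (mul_nonneg (hpM0 p.1) (pow_nonneg hB0 p.1))]
    apply ENNReal.ofReal_le_ofReal
    simpa [Real.norm_eq_abs] using hFabs p
  have hsum_ne_top : (∑' p : ℕ × ℕ, ∫⁻ ω, ‖F p ω‖ₑ ∂μ) ≠ ⊤ := by
    have hle : (∑' p : ℕ × ℕ, ∫⁻ ω, ‖F p ω‖ₑ ∂μ)
        ≤ ∑' p : ℕ × ℕ, ENNReal.ofReal (pM p.1 * B ^ p.1) * ENNReal.ofReal (pK p.2 * A ^ p.2) :=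
      ENNReal.tsum_le_tsum hnormF
    have heq : (∑' p : ℕ × ℕ,
          ENNReal.ofReal (pM p.1 * B ^ p.1) * ENNReal.ofReal (pK p.2 * A ^ p.2))
        = (∑' m, ENNReal.ofReal (pM m * B ^ m)) * (∑' k, ENNReal.ofReal (pK k * A ^ k)) := by
      rw [ENNReal.tsum_prod']
      simp_rw [ENNReal.tsum_mul_left, ENNReal.tsum_mul_right]
    have hfin : (∑' m, ENNReal.ofReal (pM m * B ^ m)) * (∑' k, ENNReal.ofReal (pK k * A ^ k))
        ≠ ⊤ := by
      rw [← ENNReal.ofReal_tsum_of_nonneg (fun m => mul_nonneg (hpM0 m) (pow_nonneg hB0 m)) hMsum,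
        ← ENNReal.ofReal_tsum_of_nonneg (fun k => mul_nonneg (hpK0 k) (pow_nonneg hA0 k)) hKsum]
      exact ENNReal.mul_ne_top ENNReal.ofReal_ne_top ENNReal.ofReal_ne_top
    exact ne_top_of_le_ne_top hfin (hle.trans heq.le)
  have hmeasF : ∀ p : ℕ × ℕ, AEStronglyMeasurable (F p) μ :=
    fun p => (hFint p).aestronglyMeasurable
  have hint_tsum := integral_tsum hmeasF hsum_ne_top
  -- summability of real series
  have huS : Summable fun m => pM m * β ^ m := by
    refine Summable.of_abs (Summable.of_nonneg_of_le (fun m => abs_nonneg _) (fun m => ?_) hMsum)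
    rw [abs_mul, abs_of_nonneg (hpM0 m), abs_pow]
    exact mul_le_mul_of_nonneg_left (pow_le_pow_left₀ (abs_nonneg β) hβB m) (hpM0 m)
  have hvS : Summable fun k => pK k * α ^ k := by
    refine Summable.of_abs (Summable.of_nonneg_of_le (fun k => abs_nonneg _) (fun k => ?_) hKsum)
    rw [abs_mul, abs_of_nonneg (hpK0 k), abs_pow]
    exact mul_le_mul_of_nonneg_left (pow_le_pow_left₀ (abs_nonneg α) hαA k) (hpK0 k)
  have hprodS : Summable fun p : ℕ × ℕ => (pM p.1 * β ^ p.1) * (pK p.2 * α ^ p.2) := by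
    have habs2 : Summable fun p : ℕ × ℕ => |pM p.1 * β ^ p.1| * |pK p.2 * α ^ p.2| :=
      Summable.mul_of_nonneg huS.abs hvS.abs (fun m => abs_nonneg _) (fun k => abs_nonneg _)
    exact Summable.of_norm (habs2.congr fun p => by
      rw [Real.norm_eq_abs]; exact (abs_mul _ _).symm)
  calc ∫ ω, ∏ j ∈ Finset.range (M ω + K ω), q (M ω) j (X j ω) ∂μ
      = ∫ ω, ∑' p, F p ω ∂μ := by simp_rw [hpt]
    _ = ∑' p, ∫ ω, F p ω ∂μ := hint_tsum
    _ = ∑' p : ℕ × ℕ, (pM p.1 * β ^ p.1) * (pK p.2 * α ^ p.2) := tsum_congr hFval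
    _ = (∑' m, pM m * β ^ m) * (∑' k, pK k * α ^ k) := by
        rw [Summable.tsum_prod' hprodS (fun m => by simpa using hvS.mul_left (pM m * β ^ m))]
        simp_rw [tsum_mul_left, tsum_mul_right]
private lemma ident_transfer {Ω : Type*} [MeasurableSpace Ω] {μ : Measure Ω}
    {X : ℕ → Ω → ℝ} (hXmeas : ∀ j, Measurable (X j))
    (hident : ∀ j, Measure.map (X j) μ = Measure.map (X 0) μ)
    (g : ℝ → ℝ) (hg : Measurable g) (j : ℕ)
    (hint : Integrable (fun ω => g (X 0 ω)) μ) :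
    Integrable (fun ω => g (X j ω)) μ ∧ ∫ ω, g (X j ω) ∂μ = ∫ ω, g (X 0 ω) ∂μ := by
  have h0 : Integrable g (Measure.map (X 0) μ) := by
    rw [integrable_map_measure hg.aestronglyMeasurable (hXmeas 0).aemeasurable]
    exact hint
  constructor
  · have hj : Integrable g (Measure.map (X j) μ) := by rw [hident j]; exact h0
    rwa [integrable_map_measure hg.aestronglyMeasurable (hXmeas j).aemeasurable] at hj
  · rw [← integral_map (hXmeas j).aemeasurable hg.aestronglyMeasurable, hident j,
      integral_map (hXmeas 0).aemeasurable hg.aestronglyMeasurable]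

private lemma prod_trunc (f : ℕ → ℝ) (m k : ℕ) :
    ∏ j ∈ Finset.range (m + k), (if j < m then f j else 1) = ∏ j ∈ Finset.range m, f j := by
  have hsub : Finset.range m ⊆ Finset.range (m + k) :=
    Finset.range_subset_range.mpr (Nat.le_add_right m k)
  rw [← Finset.prod_subset hsub
    (fun x _ hx => if_neg (fun h => hx (Finset.mem_range.mpr h)))]
  exact Finset.prod_congr rfl fun j hj => if_pos (Finset.mem_range.mp hj)

private lemma prod_split_sq (f : ℕ → ℝ) (m k : ℕ) :
    ∏ j ∈ Finset.range (m + k), (if j < m then f j ^ 2 else f j)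
      = (∏ j ∈ Finset.range (m + k), f j) * ∏ j ∈ Finset.range m, f j := by
  have h1 : ∀ j, (if j < m then f j ^ 2 else f j) = f j * (if j < m then f j else 1) := by
    intro j; by_cases h : j < m <;> simp [h, pow_two]
  rw [Finset.prod_congr rfl fun j _ => h1 j, Finset.prod_mul_distrib, prod_trunc]

private lemma pois_summable (c C : ℝ) :
    Summable fun m : ℕ => (Real.exp (-c) * c ^ m / (Nat.factorial m)) * C ^ m := by
  have h := (Real.summable_pow_div_factorial (c * C)).mul_left (Real.exp (-c))
  refine h.congr fun m => ?_
  rw [mul_pow]; ring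

set_option maxHeartbeats 2000000 in
/-- covariance of the multiplicative compound Poisson process. With
`N_π(s) = ∏_{j<M} X_j` and `N_π(t) = ∏_{j<M+K} X_j`, where `M ~ Poisson(λs)`,
`K ~ Poisson(λ(t−s))` and the i.i.d. `X_j` are jointly independent of `(M,K)`,
`E[N_π(t)N_π(s)] = e^{λs(E[X²]−1)} e^{λ(t−s)(E[X]−1)}` and
`Cov(N_π(t),N_π(s)) = e^{λt(E[X]−1)}(e^{λsE[X(X−1)]} − e^{λs(E[X]−1)})`. -/
theorem covariance_multiplicative_compound_poisson {Ω : Type*} [MeasurableSpace Ω]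
    (μ : Measure Ω) [IsProbabilityMeasure μ] (lam s t : ℝ) (hlam : 0 < lam)
    (hs : 0 < s) (hst : s < t) (X : ℕ → Ω → ℝ) (M K : Ω → ℕ)
    (hXmeas : ∀ j, Measurable (X j)) (hMmeas : Measurable M) (hKmeas : Measurable K)
    (hM : ∀ k : ℕ, μ {ω | M ω = k} =
      ENNReal.ofReal (Real.exp (-(lam * s)) * (lam * s) ^ k / (Nat.factorial k)))
    (hK : ∀ k : ℕ, μ {ω | K ω = k} =
      ENNReal.ofReal (Real.exp (-(lam * (t - s))) * (lam * (t - s)) ^ k / (Nat.factorial k)))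
    (hident : ∀ j, Measure.map (X j) μ = Measure.map (X 0) μ)
    (hmom1 : Integrable (fun ω => X 0 ω) μ)
    (hmom2 : Integrable (fun ω => (X 0 ω) ^ 2) μ)
    (hindep : iIndepFun (m := covMS) (covFam X M K) μ) :
    ∫ ω, (∏ j ∈ Finset.range (M ω + K ω), X j ω) * (∏ j ∈ Finset.range (M ω), X j ω) ∂μ =
      Real.exp (lam * s * ((∫ ω, (X 0 ω) ^ 2 ∂μ) - 1)) *
        Real.exp (lam * (t - s) * ((∫ ω, X 0 ω ∂μ) - 1)) ∧
    (∫ ω, (∏ j ∈ Finset.range (M ω + K ω), X j ω) * (∏ j ∈ Finset.range (M ω), X j ω) ∂μ) -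
      (∫ ω, ∏ j ∈ Finset.range (M ω + K ω), X j ω ∂μ) *
        (∫ ω, ∏ j ∈ Finset.range (M ω), X j ω ∂μ) =
      Real.exp (lam * t * ((∫ ω, X 0 ω ∂μ) - 1)) *
        (Real.exp (lam * s * (∫ ω, X 0 ω * (X 0 ω - 1) ∂μ)) -
          Real.exp (lam * s * ((∫ ω, X 0 ω ∂μ) - 1))) := by
  classical
  set a := ∫ ω, X 0 ω ∂μ with ha_def
  set b := ∫ ω, (X 0 ω) ^ 2 ∂μ with hb_def
  set A := ∫ ω, |X 0 ω| ∂μ with hA_def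
  have hT2 := fun j => ident_transfer hXmeas hident (fun x => x ^ 2) (by fun_prop) j hmom2
  have hT1 := fun j => ident_transfer hXmeas hident (fun x => x) (by fun_prop) j hmom1
  have hTabs := fun j => ident_transfer hXmeas hident (fun x => |x|) (by fun_prop) j hmom1.abs
  set pM : ℕ → ℝ := fun m => Real.exp (-(lam * s)) * (lam * s) ^ m / (Nat.factorial m)
    with hpM_def
  set pK : ℕ → ℝ := fun k =>
    Real.exp (-(lam * (t - s))) * (lam * (t - s)) ^ k / (Nat.factorial k) with hpK_def
  have hls : 0 < lam * s := mul_pos hlam hs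
  have hlts : 0 < lam * (t - s) := mul_pos hlam (by linarith)
  have hpM0 : ∀ m, 0 ≤ pM m := fun m => by
    rw [hpM_def]; positivity
  have hpK0 : ∀ k, 0 ≤ pK k := fun k => by
    rw [hpK_def]; positivity
  -- the three expectations via the master lemma
  have I1 : ∫ ω, ∏ j ∈ Finset.range (M ω + K ω),
        (if j < M ω then X j ω ^ 2 else X j ω) ∂μ =
      (∑' m, pM m * b ^ m) * (∑' k, pK k * a ^ k) := by
    refine master μ X M K hXmeas hMmeas hKmeas hindep
      (fun m j x => if j < m then x ^ 2 else x)
      (fun m j => by by_cases h : j < m <;> simp only [h, if_true, if_false] <;> fun_prop)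
      a b A b
      (fun m j => ?_) (fun m j h => ?_) (fun m j h => ?_) (fun m j h => ?_) (fun m j h => ?_)
      pM pK hpM0 hpK0 hM hK (pois_summable _ _) (pois_summable _ _)
    · by_cases h : j < m <;> simp only [h, if_true, if_false]
      · exact (hT2 j).1
      · exact (hT1 j).1
    · simp only [if_pos h]; exact (hT2 j).2
    · simp only [if_neg (Nat.not_lt.mpr h)]; exact (hT1 j).2
    · simp only [if_pos h]
      have he : (fun ω => |X j ω ^ 2|) = fun ω => X j ω ^ 2 :=
        funext fun ω => abs_of_nonneg (sq_nonneg _)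
      exact le_of_eq (by rw [he]; exact (hT2 j).2)
    · simp only [if_neg (Nat.not_lt.mpr h)]
      exact le_of_eq (hTabs j).2
  have I2 : ∫ ω, ∏ j ∈ Finset.range (M ω + K ω), X j ω ∂μ =
      (∑' m, pM m * a ^ m) * (∑' k, pK k * a ^ k) := by
    refine master μ X M K hXmeas hMmeas hKmeas hindep (fun m j x => x)
      (fun m j => by fun_prop) a a A A
      (fun m j => (hT1 j).1) (fun m j _ => (hT1 j).2) (fun m j _ => (hT1 j).2)
      (fun m j _ => le_of_eq (hTabs j).2) (fun m j _ => le_of_eq (hTabs j).2)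
      pM pK hpM0 hpK0 hM hK (pois_summable _ _) (pois_summable _ _)
  have I3 : ∫ ω, ∏ j ∈ Finset.range (M ω + K ω),
        (if j < M ω then X j ω else 1) ∂μ =
      (∑' m, pM m * a ^ m) * (∑' k, pK k * (1:ℝ) ^ k) := by
    refine master μ X M K hXmeas hMmeas hKmeas hindep
      (fun m j x => if j < m then x else 1)
      (fun m j => by by_cases h : j < m <;> simp only [h, if_true, if_false] <;> fun_prop)
      1 a 1 A
      (fun m j => ?_) (fun m j h => ?_) (fun m j h => ?_) (fun m j h => ?_) (fun m j h => ?_)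
      pM pK hpM0 hpK0 hM hK (pois_summable _ _) (pois_summable _ _)
    · by_cases h : j < m <;> simp only [h, if_true, if_false]
      · exact (hT1 j).1
      · exact integrable_const 1
    · simp only [if_pos h]; exact (hT1 j).2
    · simp only [if_neg (Nat.not_lt.mpr h)]; simp
    · simp only [if_pos h]; exact le_of_eq (hTabs j).2
    · simp only [if_neg (Nat.not_lt.mpr h)]; simp
  -- evaluate the tsums
  have hsb : ∑' m, pM m * b ^ m = Real.exp (lam * s * (b - 1)) := by
    simp only [hpM_def]; exact poisson_tsum (lam * s) b
  have hsa : ∑' m, pM m * a ^ m = Real.exp (lam * s * (a - 1)) := by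
    simp only [hpM_def]; exact poisson_tsum (lam * s) a
  have hta : ∑' k, pK k * a ^ k = Real.exp (lam * (t - s) * (a - 1)) := by
    simp only [hpK_def]; exact poisson_tsum (lam * (t - s)) a
  have ht1 : ∑' k, pK k * (1:ℝ) ^ k = 1 := by
    simp only [hpK_def]
    rw [poisson_tsum (lam * (t - s)) 1]
    simp
  -- rewrite the integrands
  have e1 : ∫ ω, (∏ j ∈ Finset.range (M ω + K ω), X j ω) *
        (∏ j ∈ Finset.range (M ω), X j ω) ∂μ
      = ∫ ω, ∏ j ∈ Finset.range (M ω + K ω), (if j < M ω then X j ω ^ 2 else X j ω) ∂μ := by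
    refine integral_congr_ae (Filter.Eventually.of_forall fun ω => ?_)
    exact (prod_split_sq (fun j => X j ω) (M ω) (K ω)).symm
  have e3 : ∫ ω, ∏ j ∈ Finset.range (M ω), X j ω ∂μ
      = ∫ ω, ∏ j ∈ Finset.range (M ω + K ω), (if j < M ω then X j ω else 1) ∂μ := by
    refine integral_congr_ae (Filter.Eventually.of_forall fun ω => ?_)
    exact (prod_trunc (fun j => X j ω) (M ω) (K ω)).symm
  have E1 : ∫ ω, (∏ j ∈ Finset.range (M ω + K ω), X j ω) *
        (∏ j ∈ Finset.range (M ω), X j ω) ∂μ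
      = Real.exp (lam * s * (b - 1)) * Real.exp (lam * (t - s) * (a - 1)) := by
    rw [e1, I1, hsb, hta]
  have E2 : ∫ ω, ∏ j ∈ Finset.range (M ω + K ω), X j ω ∂μ
      = Real.exp (lam * s * (a - 1)) * Real.exp (lam * (t - s) * (a - 1)) := by
    rw [I2, hsa, hta]
  have E3 : ∫ ω, ∏ j ∈ Finset.range (M ω), X j ω ∂μ
      = Real.exp (lam * s * (a - 1)) := by
    rw [e3, I3, hsa, ht1, mul_one]
  have hba : ∫ ω, X 0 ω * (X 0 ω - 1) ∂μ = b - a := by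
    have he : (fun ω => X 0 ω * (X 0 ω - 1)) = fun ω => (X 0 ω) ^ 2 - X 0 ω := by
      funext ω; ring
    rw [he, integral_sub hmom2 hmom1]
  refine ⟨E1, ?_⟩
  rw [E1, E2, E3, hba]
  have h1 : lam * s * (b - 1) + lam * (t - s) * (a - 1)
      = lam * t * (a - 1) + lam * s * (b - a) := by ring
  have h2 : lam * s * (a - 1) + lam * (t - s) * (a - 1) + lam * s * (a - 1)
      = lam * t * (a - 1) + lam * s * (a - 1) := by ring
  simp only [← Real.exp_add]
  rw [h1, h2, Real.exp_add, Real.exp_add]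
  exact (mul_sub _ _ _).symm
end

section
/- Let a ∈ ℝ and b > 0, and let X be a real random variable with the Cauchy distribution C(a, b), i.e. with probability density x ↦ (1/π) · b/((x−a)² + b²). Then X ≠ 0 almost surely and the random variable 1/X has the Cauchy distribution C(a/(a²+b²), b/(a²+b²)), i.e. its density is x ↦ (1/π) · (b/(a²+b²)) / ((x − a/(a²+b²))² + (b/(a²+b²))²). In particular, if a = 0 then 1/X ~ C(0, 1/b). -/
open MeasureTheory

theorem inv_cauchy_lintegral_aux {s : Set ℝ} {f : ℝ → ℝ} {f' : ℝ → ℝ}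
    (hs : MeasurableSet s) (hf' : ∀ x ∈ s, HasDerivWithinAt f (f' x) s x)
    (hf : Set.InjOn f s) (g : ℝ → ENNReal) :
    ∫⁻ x in f '' s, g x = ∫⁻ x in s, ENNReal.ofReal |f' x| * g (f x) := by
  simpa only [ContinuousLinearMap.det_toSpanSingleton] using
    MeasureTheory.lintegral_image_eq_lintegral_abs_det_fderiv_mul volume hs
      (fun x hx => (hf' x hx).hasFDerivWithinAt) hf g

/-- if `X ~ C(a,b)` is Cauchy with location `a` and scale `b > 0`, then
`X ≠ 0` almost surely and `1/X ~ C(a/(a²+b²), b/(a²+b²))`. -/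
theorem inv_cauchy {Ω : Type*} [MeasurableSpace Ω] (μ : Measure Ω)
    [IsProbabilityMeasure μ] (a b : ℝ) (hb : 0 < b) (X : Ω → ℝ) (hXmeas : Measurable X)
    (hX : Measure.map X μ =
      volume.withDensity fun x => ENNReal.ofReal ((1 / Real.pi) * (b / ((x - a) ^ 2 + b ^ 2)))) :
    (∀ᵐ ω ∂μ, X ω ≠ 0) ∧
    Measure.map (fun ω => (X ω)⁻¹) μ =
      volume.withDensity fun x => ENNReal.ofReal ((1 / Real.pi) *
        ((b / (a ^ 2 + b ^ 2)) /
          ((x - a / (a ^ 2 + b ^ 2)) ^ 2 + (b / (a ^ 2 + b ^ 2)) ^ 2))) := by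
  set fd : ℝ → ENNReal :=
    fun x => ENNReal.ofReal ((1 / Real.pi) * (b / ((x - a) ^ 2 + b ^ 2))) with hfd
  set gd : ℝ → ENNReal := fun x => ENNReal.ofReal ((1 / Real.pi) *
      ((b / (a ^ 2 + b ^ 2)) /
        ((x - a / (a ^ 2 + b ^ 2)) ^ 2 + (b / (a ^ 2 + b ^ 2)) ^ 2))) with hgd
  have hab : (0:ℝ) < a ^ 2 + b ^ 2 := by positivity
  have h0 : (volume.withDensity fd) {0} = 0 :=
    withDensity_absolutelyContinuous volume fd (measure_singleton 0)
  have hae : ∀ᵐ ω ∂μ, X ω ≠ 0 := by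
    rw [ae_iff]
    have : {ω | ¬ X ω ≠ 0} = X ⁻¹' {0} := by ext ω; simp
    rw [this, ← Measure.map_apply hXmeas (measurableSet_singleton 0), hX, h0]
  refine ⟨hae, ?_⟩
  have hcomp : (fun ω => (X ω)⁻¹) = (fun x : ℝ => x⁻¹) ∘ X := rfl
  rw [hcomp, ← Measure.map_map measurable_inv hXmeas, hX]
  ext s hs
  rw [Measure.map_apply measurable_inv hs]
  have hmeas : MeasurableSet ((fun x : ℝ => x⁻¹) ⁻¹' s) := measurable_inv hs
  have hνnull : (volume.withDensity fd) ((fun x : ℝ => x⁻¹) ⁻¹' s) =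
      (volume.withDensity fd) (((fun x : ℝ => x⁻¹) ⁻¹' s) \ {0}) :=
    (measure_diff_null h0).symm
  have himg : ((fun x : ℝ => x⁻¹) ⁻¹' s) \ {0} = (fun x : ℝ => x⁻¹) '' (s \ {0}) := by
    ext x
    simp only [Set.mem_diff, Set.mem_preimage, Set.mem_singleton_iff, Set.mem_image]
    constructor
    · rintro ⟨hx, hx0⟩
      exact ⟨x⁻¹, ⟨hx, inv_ne_zero hx0⟩, inv_inv x⟩
    · rintro ⟨y, ⟨hy, hy0⟩, rfl⟩
      exact ⟨by rwa [inv_inv], inv_ne_zero hy0⟩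
  rw [hνnull, himg, withDensity_apply _ (by rw [← himg]; exact hmeas.diff (measurableSet_singleton 0)),
    withDensity_apply _ hs]
  have hsdm : MeasurableSet (s \ {0}) := hs.diff (measurableSet_singleton 0)
  rw [inv_cauchy_lintegral_aux hsdm
      (f' := fun x => -(x ^ 2)⁻¹)
      (fun x hx => ((hasDerivAt_inv (by exact hx.2)).hasDerivWithinAt))
      (fun x hx y hy hxy => by
        have := congrArg (fun t : ℝ => t⁻¹) hxy
        simpa [inv_inv] using this)]
  have hcong : ∀ x ∈ s \ {0},
      ENNReal.ofReal |(-(x ^ 2)⁻¹)| * fd x⁻¹ = gd x := by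
    intro x hx
    have hx0 : x ≠ 0 := hx.2
    have habs : |(-(x ^ 2)⁻¹)| = (x ^ 2)⁻¹ := by
      rw [abs_neg, abs_of_nonneg (by positivity)]
    rw [habs, hfd, hgd, ← ENNReal.ofReal_mul (by positivity)]
    congr 1
    have hd1 : (x⁻¹ - a) ^ 2 + b ^ 2 ≠ 0 := by positivity
    have hd2 : (x - a / (a ^ 2 + b ^ 2)) ^ 2 + (b / (a ^ 2 + b ^ 2)) ^ 2 ≠ 0 := by positivity
    have hab' : a ^ 2 + b ^ 2 ≠ 0 := ne_of_gt hab
    field_simp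
    ring
  rw [setLIntegral_congr_fun hsdm hcong]
  exact setLIntegral_congr (diff_ae_eq_self.2
    (measure_mono_null Set.inter_subset_right (measure_singleton 0)))
end

section
/- Let (F_n) be the Fibonacci numbers with F_1 = F_2 = 1 and let φ = (1+√5)/2 be the golden ratio. Then for every integer n ≥ 1, F_{n+1}/F_n = φ + √5 · Σ_{j=1}^∞ ((1−φ)/φ)^{n j}, where the geometric-type series on the right converges absolutely since |(1−φ)/φ| < 1. -/
open Real goldenRatio

lemma abs_goldConj_lt_gold : |goldenConj| < goldenRatio := by
  rw [abs_of_neg goldenConj_neg]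
  have h5 : (1:ℝ) < Real.sqrt 5 := by
    nlinarith [Real.sq_sqrt (by norm_num : (5:ℝ) ≥ 0), Real.sqrt_nonneg 5]
  unfold goldenConj goldenRatio
  linarith

lemma abs_ratio_lt_one : |goldenConj / goldenRatio| < 1 := by
  rw [abs_div, abs_of_pos goldenRatio_pos, div_lt_one goldenRatio_pos]
  exact abs_goldConj_lt_gold

lemma ddc (x y c : ℝ) (hc : c ≠ 0) : x / c / (y / c) = x / y := by
  rw [div_div_div_comm, div_self hc, div_one]

lemma key_alg (n : ℕ) (a b s : ℝ) (ha : a ^ n ≠ 0) (hD : a ^ n - b ^ n ≠ 0)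
    (hs : s ≠ 0) (hsub : a - b = s) :
    (a ^ (n+1) - b ^ (n+1)) / s / ((a ^ n - b ^ n) / s) =
      a + s * (b ^ n / a ^ n / ((a ^ n - b ^ n) / a ^ n)) := by
  rw [ddc _ _ _ hs, ddc _ _ _ ha, pow_succ, pow_succ, ← hsub]
  rw [div_eq_iff hD, add_mul, mul_assoc, div_mul_cancel₀ _ hD]
  ring

/-- for every `n ≥ 1`, with `φ = (1+√5)/2` the golden ratio and `F_n` the
Fibonacci numbers, `F_{n+1}/F_n = φ + √5 Σ_{j=1}^∞ ((1−φ)/φ)^{nj}`, the series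
converging absolutely since `|(1−φ)/φ| < 1`. -/
theorem fib_ratio_golden_series (n : ℕ) (hn : 1 ≤ n) :
    Summable (fun j : ℕ => |((1 - (1 + Real.sqrt 5) / 2) / ((1 + Real.sqrt 5) / 2)) ^ (n * (j + 1))|) ∧
    (Nat.fib (n + 1) : ℝ) / (Nat.fib n : ℝ) =
      (1 + Real.sqrt 5) / 2 + Real.sqrt 5 *
        ∑' j : ℕ, ((1 - (1 + Real.sqrt 5) / 2) / ((1 + Real.sqrt 5) / 2)) ^ (n * (j + 1)) := by
  have h1 : (1 : ℝ) - (1 + Real.sqrt 5) / 2 = goldenConj := one_sub_goldenConj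
  have h2 : ((1 : ℝ) + Real.sqrt 5) / 2 = goldenRatio := rfl
  rw [h1, h2]
  set r : ℝ := goldenConj / goldenRatio with hr
  have habs : |r| < 1 := abs_ratio_lt_one
  have habsn : |r ^ n| < 1 := by
    rw [abs_pow]
    exact pow_lt_one₀ (abs_nonneg r) habs (by omega)
  -- summability
  have hsum : Summable (fun j : ℕ => |r ^ (n * (j + 1))|) := by
    have : Summable (fun j : ℕ => |r ^ n| ^ (j + 1)) :=
      (summable_geometric_of_lt_one (abs_nonneg _) habsn).comp_injective
        (add_left_injective 1)
    refine this.congr fun j => ?_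
    rw [← abs_pow, ← pow_mul]
  refine ⟨hsum, ?_⟩
  -- tsum value
  have hne : (1 : ℝ) - r ^ n ≠ 0 := by
    intro h
    have h' : r ^ n = 1 := by linarith
    rw [h'] at habsn
    simp at habsn
  have htsum : ∑' j : ℕ, r ^ (n * (j + 1)) = r ^ n / (1 - r ^ n) := by
    have hg := tsum_geometric_of_abs_lt_one habsn
    calc ∑' j : ℕ, r ^ (n * (j + 1)) = ∑' j : ℕ, r ^ n * (r ^ n) ^ j := by
          refine tsum_congr fun j => ?_
          rw [← pow_mul, show n * (j + 1) = n + n * j by ring, pow_add]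
      _ = r ^ n * (1 - r ^ n)⁻¹ := by rw [tsum_mul_left, hg]
      _ = r ^ n / (1 - r ^ n) := by rw [div_eq_mul_inv]
  -- Binet
  have hgold : goldenRatio ≠ 0 := goldenRatio_ne_zero
  have hgp : (0:ℝ) < goldenRatio ^ n := pow_pos goldenRatio_pos n
  have hpowne : goldenRatio ^ n - goldenConj ^ n ≠ 0 := by
    have h3 : |goldenConj ^ n| < goldenRatio ^ n := by
      rw [abs_pow]
      exact pow_lt_pow_left₀ abs_goldConj_lt_gold (abs_nonneg _) (by omega)
    have h4 := le_abs_self (goldenConj ^ n)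
    intro h; nlinarith
  have hrn : r ^ n = goldenConj ^ n / goldenRatio ^ n := div_pow _ _ n
  have hfibn : (Nat.fib n : ℝ) = (goldenRatio ^ n - goldenConj ^ n) / Real.sqrt 5 :=
    Real.coe_fib_eq n
  have hfibn1 : (Nat.fib (n+1) : ℝ) = (goldenRatio ^ (n+1) - goldenConj ^ (n+1)) / Real.sqrt 5 :=
    Real.coe_fib_eq (n+1)
  have hs5 : Real.sqrt 5 ≠ 0 := by
    have : (0:ℝ) < Real.sqrt 5 := Real.sqrt_pos.mpr (by norm_num)
    linarith
  have hone_sub : 1 - r ^ n = (goldenRatio ^ n - goldenConj ^ n) / goldenRatio ^ n := by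
    rw [hrn]; field_simp
  have hsub : goldenRatio - goldenConj = Real.sqrt 5 := goldenRatio_sub_goldenConj
  rw [htsum, hone_sub, hfibn, hfibn1, hrn]
  exact key_alg n goldenRatio goldenConj (Real.sqrt 5) (ne_of_gt hgp) hpowne hs5 hsub
end
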